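/- arXiv:2506.10388 — 3 statements merged into one kernel-verified Lean document; each statement's English description precedes it below -/
import Mathlib

section
/- Let {S(t) : t ≥ 0} be an asymptotically closed semigroup on a metric space (V,d). Then the following are equivalent: (1) the semigroup has a global attractor A in V; (2) there exists a nonempty bounded absorbing set B ⊆ V such that for every sequence t_k ≥ 0 with t_k → ∞ and every sequence x_k ∈ B, the sequence S(t_k)x_k has a convergent subsequence, and in this case A = Λ^V(B); (3) there exists a nonempty compact set K ⊆ V attracting all bounded subsets of V (i.e., dist^V(S(t)G, K) → 0 as t → ∞ for every bounded G ⊆ V), and in this case A = Λ^V(K). -/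
open Filter Metric Set Topology Bornology
open scoped ENNReal

section Defs

variable {V : Type*} [MetricSpace V]

/-- A semigroup (semiflow) of maps `S t : V → V`, `t ∈ [0,∞)`. -/
def IsSemiflow (S : ℝ → V → V) : Prop :=
  (∀ x : V, S 0 x = x) ∧ ∀ t s : ℝ, 0 ≤ t → 0 ≤ s → ∀ x : V, S t (S s x) = S (t + s) x

/-- One-sided Hausdorff distance `dist^V(G,A) = sup_{x∈G} inf_{y∈A} d(x,y)` (in `ℝ≥0∞`). -/
noncomputable def attrDist (G A : Set V) : ℝ≥0∞ :=
  ⨆ x ∈ G, EMetric.infEdist x A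

/-- The set `A` attracts all bounded subsets of `V`. -/
def AttractsSet (S : ℝ → V → V) (A : Set V) : Prop :=
  ∀ G : Set V, IsBounded G → Tendsto (fun t : ℝ => attrDist (S t '' G) A) atTop (𝓝 0)

/-- A global attractor: nonempty, compact, invariant, attracts all bounded sets. -/
def IsGlobalAttr (S : ℝ → V → V) (A : Set V) : Prop :=
  A.Nonempty ∧ IsCompact A ∧ (∀ t : ℝ, 0 ≤ t → S t '' A = A) ∧ AttractsSet S A

/-- `B` is an absorbing set for the semigroup. -/
def IsAbsorbingSet (S : ℝ → V → V) (B : Set V) : Prop :=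
  ∀ G : Set V, IsBounded G → ∃ tG : ℝ, 0 ≤ tG ∧ ∀ t : ℝ, tG ≤ t → S t '' G ⊆ B

/-- The semigroup is asymptotically closed. -/
def AsympClosed (S : ℝ → V → V) : Prop :=
  ∀ t : ℝ, 0 ≤ t → ∀ tk : ℕ → ℝ, (∀ k, 0 ≤ tk k) → Tendsto tk atTop atTop →
    ∀ xk : ℕ → V, IsBounded (range xk) → ∀ x y : V,
      Tendsto (fun k => S (tk k) (xk k)) atTop (𝓝 x) →
      Tendsto (fun k => S (t + tk k) (xk k)) atTop (𝓝 y) → S t x = y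

/-- The ω-limit set `Λ^V(G) = ⋂_{s ≥ 0} cl_V ⋃_{t ≥ s} S(t)G`. -/
def omegaLim (S : ℝ → V → V) (G : Set V) : Set V :=
  ⋂ (s : ℝ) (_ : 0 ≤ s), closure (⋃ (t : ℝ) (_ : s ≤ t), S t '' G)

/-- `N^V(G,ε)`: minimal number of open `ε`-balls centered in `G` needed to cover `G`. -/
noncomputable def coverN (G : Set V) (ε : ℝ) : ℝ≥0∞ :=
  ⨅ (F : Finset V) (_ : ↑F ⊆ G) (_ : G ⊆ ⋃ x ∈ F, ball x ε), (F.card : ℝ≥0∞)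

open Classical in
/-- Fractal (box-counting) dimension `limsup_{ε→0⁺} log N^V(M,ε) / log (1/ε)`. -/
noncomputable def fracDim (M : Set V) : ℝ≥0∞ :=
  limsup (fun ε : ℝ =>
    if coverN M ε = ⊤ then (⊤ : ℝ≥0∞)
    else ENNReal.ofReal (Real.log (coverN M ε).toReal / Real.log (1 / ε))) (𝓝[>] (0 : ℝ))

/-- `M` attracts all bounded sets at exponential rate `ξ`. -/
def ExpAttractsAt (S : ℝ → V → V) (M : Set V) (ξ : ℝ) : Prop :=
  ∀ G : Set V, IsBounded G →
    Tendsto (fun t : ℝ => ENNReal.ofReal (Real.exp (ξ * t)) * attrDist (S t '' G) M)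
      atTop (𝓝 0)

/-- A `T`-discrete exponential attractor. -/
def IsDiscExpAttr (S : ℝ → V → V) (T : ℝ) (M : Set V) : Prop :=
  M.Nonempty ∧ IsCompact M ∧ S T '' M ⊆ M ∧ fracDim M ≠ ⊤ ∧
    ∃ ξ : ℝ, 0 < ξ ∧ ExpAttractsAt S M ξ

/-- The covering condition `N^V(S(kT)B, a·qᵏ) ≤ b·hᵏ` for `k ≥ k₀`. -/
def CoveringCond (S : ℝ → V → V) (T : ℝ) (B : Set V) (k₀ : ℕ) (a b q h : ℝ) : Prop :=
  ∀ k : ℕ, k₀ ≤ k →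
    coverN (S (k * T) '' B) (a * q ^ k) ≤ ENNReal.ofReal (b * h ^ k)

end Defs


section Aux
variable {V : Type*} [MetricSpace V]

lemma mem_omegaLim_of_seq {S : ℝ → V → V} {G : Set V} {tk : ℕ → ℝ}
    (htk : Tendsto tk atTop atTop) {xk : ℕ → V} (hxk : ∀ k, xk k ∈ G) {x : V}
    (hlim : Tendsto (fun k => S (tk k) (xk k)) atTop (𝓝 x)) : x ∈ omegaLim S G := by
  simp only [omegaLim, mem_iInter]
  intro s hs
  refine mem_closure_of_tendsto hlim ?_
  filter_upwards [htk.eventually_ge_atTop s] with k hk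
  exact mem_iUnion₂.2 ⟨tk k, hk, mem_image_of_mem _ (hxk k)⟩

lemma exists_seq_of_mem_omegaLim {S : ℝ → V → V} {G : Set V} {x : V}
    (hx : x ∈ omegaLim S G) :
    ∃ tk : ℕ → ℝ, ∃ xk : ℕ → V, (∀ k : ℕ, (k : ℝ) ≤ tk k) ∧ (∀ k, xk k ∈ G) ∧
      Tendsto (fun k => S (tk k) (xk k)) atTop (𝓝 x) := by
  simp only [omegaLim, mem_iInter] at hx
  have h : ∀ k : ℕ, ∃ t : ℝ, (k:ℝ) ≤ t ∧ ∃ g ∈ G, dist x (S t g) < 1/(k+1) := by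
    intro k
    have h2 := hx (k:ℝ) (Nat.cast_nonneg k)
    rw [Metric.mem_closure_iff] at h2
    obtain ⟨b, hb, hdb⟩ := h2 (1/(k+1)) (by positivity)
    simp only [mem_iUnion₂, mem_image] at hb
    obtain ⟨t, ht, g, hg, rfl⟩ := hb
    exact ⟨t, ht, g, hg, hdb⟩
  choose tk htk g hg hd using h
  refine ⟨tk, g, htk, hg, ?_⟩
  rw [tendsto_iff_dist_tendsto_zero]
  apply squeeze_zero (fun k => dist_nonneg) (fun k => (dist_comm (S (tk k) (g k)) x ▸ (hd k).le))
  exact tendsto_one_div_add_atTop_nhds_zero_nat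

lemma omegaLim_mono {S : ℝ → V → V} {G H : Set V} (h : G ⊆ H) :
    omegaLim S G ⊆ omegaLim S H :=
  iInter₂_mono fun _ _ => closure_mono <| iUnion₂_mono fun _ _ => image_mono h

lemma infEdist_le_attrDist {G A : Set V} {x : V} (hx : x ∈ G) :
    EMetric.infEdist x A ≤ attrDist G A :=
  le_iSup₂ (f := fun y (_ : y ∈ G) => EMetric.infEdist y A) x hx

lemma globalAttr_of_absorbing {S : ℝ → V → V} (hS : IsSemiflow S) (hac : AsympClosed S)
    {B : Set V} (hne : B.Nonempty) (hbd : IsBounded B) (habs : IsAbsorbingSet S B)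
    (hsc : ∀ tk : ℕ → ℝ, (∀ k, 0 ≤ tk k) → Tendsto tk atTop atTop →
      ∀ xk : ℕ → V, (∀ k, xk k ∈ B) →
        ∃ φ : ℕ → ℕ, StrictMono φ ∧ ∃ z : V,
          Tendsto (fun j => S (tk (φ j)) (xk (φ j))) atTop (𝓝 z)) :
    IsGlobalAttr S (omegaLim S B) := by
  set A := omegaLim S B with hA
  have hcast : Tendsto (fun k : ℕ => (k : ℝ)) atTop atTop := tendsto_natCast_atTop_atTop
  -- Nonempty
  have hAne : A.Nonempty := by
    obtain ⟨x₀, hx₀⟩ := hne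
    obtain ⟨φ, hφ, z, hz⟩ := hsc (fun k => (k : ℝ)) (fun k => Nat.cast_nonneg k) hcast
      (fun _ => x₀) (fun _ => hx₀)
    exact ⟨z, mem_omegaLim_of_seq (hcast.comp hφ.tendsto_atTop) (fun _ => hx₀) hz⟩
  -- Compact
  have hAcp : IsCompact A := by
    refine IsSeqCompact.isCompact ?_
    intro u hu
    have h : ∀ k : ℕ, ∃ t : ℝ, (k:ℝ) ≤ t ∧ ∃ g ∈ B, dist (u k) (S t g) < 1/(k+1) := by
      intro k
      have h2 := mem_iInter.mp (hu k) (k:ℝ)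
      have h3 := mem_iInter.mp h2 (Nat.cast_nonneg k)
      rw [Metric.mem_closure_iff] at h3
      obtain ⟨b, hb, hdb⟩ := h3 (1/(k+1)) (by positivity)
      simp only [mem_iUnion₂, mem_image] at hb
      obtain ⟨t, ht, g, hg, rfl⟩ := hb
      exact ⟨t, ht, g, hg, hdb⟩
    choose tk htk g hg hd using h
    have htk0 : ∀ k, 0 ≤ tk k := fun k => le_trans (Nat.cast_nonneg k) (htk k)
    have htkT : Tendsto tk atTop atTop := tendsto_atTop_mono htk hcast
    obtain ⟨φ, hφ, z, hz⟩ := hsc tk htk0 htkT g hg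
    have hd0 : Tendsto (fun j => dist (S (tk (φ j)) (g (φ j))) (u (φ j))) atTop (𝓝 0) := by
      have hb : ∀ j : ℕ, dist (S (tk (φ j)) (g (φ j))) (u (φ j)) ≤ 1/(j+1) := by
        intro j
        have h1 : dist (u (φ j)) (S (tk (φ j)) (g (φ j))) < 1/(φ j + 1) := hd (φ j)
        have hle : (j:ℝ) ≤ (φ j : ℝ) := Nat.cast_le.mpr hφ.le_apply
        have h2 : (1:ℝ)/(φ j + 1) ≤ 1/(j+1) :=
          one_div_le_one_div_of_le (by positivity) (by linarith)
        rw [dist_comm]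
        linarith
      exact squeeze_zero (fun j => dist_nonneg) hb tendsto_one_div_add_atTop_nhds_zero_nat
    refine ⟨z, ?_, φ, hφ, hz.congr_dist hd0⟩
    exact mem_omegaLim_of_seq ((htkT.comp hφ.tendsto_atTop)) (fun j => hg (φ j))
      (hz)
  -- Invariance
  have hinv : ∀ t : ℝ, 0 ≤ t → S t '' A = A := by
    intro t ht
    apply Subset.antisymm
    · rintro _ ⟨x, hx, rfl⟩
      obtain ⟨tk, xk, htk, hxk, hlim⟩ := exists_seq_of_mem_omegaLim hx
      have htk0 : ∀ k, 0 ≤ tk k := fun k => le_trans (Nat.cast_nonneg k) (htk k)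
      have htkT : Tendsto tk atTop atTop := tendsto_atTop_mono htk hcast
      have httk0 : ∀ k, 0 ≤ t + tk k := fun k => add_nonneg ht (htk0 k)
      have httkT : Tendsto (fun k => t + tk k) atTop atTop :=
        tendsto_atTop_add_const_left _ t htkT
      obtain ⟨φ, hφ, y, hy⟩ := hsc (fun k => t + tk k) httk0 httkT xk hxk
      have hbR : IsBounded (range fun j => xk (φ j)) :=
        hbd.subset (range_subset_iff.mpr fun j => hxk (φ j))
      have hSt : S t x = y := hac t ht (fun j => tk (φ j)) (fun j => htk0 (φ j))
        (htkT.comp hφ.tendsto_atTop) (fun j => xk (φ j)) hbR x y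
        (hlim.comp hφ.tendsto_atTop) hy
      rw [hSt]
      exact mem_omegaLim_of_seq (httkT.comp hφ.tendsto_atTop) (fun j => hxk (φ j)) hy
    · intro x hx
      obtain ⟨tk, xk, htk, hxk, hlim⟩ := exists_seq_of_mem_omegaLim hx
      have htkT : Tendsto tk atTop atTop := tendsto_atTop_mono htk hcast
      set sk : ℕ → ℝ := fun k => max (tk k - t) 0 with hsk
      have hsk0 : ∀ k, 0 ≤ sk k := fun k => le_max_right _ _
      have hskT : Tendsto sk atTop atTop :=
        tendsto_atTop_mono (fun k => le_max_left _ _) (htkT.atTop_add tendsto_const_nhds)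
      have hev : ∀ᶠ k in atTop, t + sk k = tk k := by
        filter_upwards [htkT.eventually_ge_atTop t] with k hk
        simp [hsk, max_eq_left (sub_nonneg.mpr hk)]
      obtain ⟨φ, hφ, w, hw⟩ := hsc sk hsk0 hskT xk hxk
      have hbR : IsBounded (range fun j => xk (φ j)) :=
        hbd.subset (range_subset_iff.mpr fun j => hxk (φ j))
      have hev2 : ∀ᶠ j in atTop, S (t + sk (φ j)) (xk (φ j)) = S (tk (φ j)) (xk (φ j)) := by
        have := hφ.tendsto_atTop.eventually hev
        filter_upwards [this] with j hj
        rw [hj]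
      have hlim2 : Tendsto (fun j => S (t + sk (φ j)) (xk (φ j))) atTop (𝓝 x) :=
        Filter.Tendsto.congr' (hev2.mono fun _ h => h.symm) (hlim.comp hφ.tendsto_atTop)
      have hSt : S t w = x := hac t ht (fun j => sk (φ j)) (fun j => hsk0 (φ j))
        (hskT.comp hφ.tendsto_atTop) (fun j => xk (φ j)) hbR w x
        (hw) hlim2
      exact ⟨w, mem_omegaLim_of_seq (hskT.comp hφ.tendsto_atTop) (fun j => hxk (φ j)) hw, hSt⟩
  refine ⟨hAne, hAcp, hinv, ?_⟩
  -- Attraction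
  intro G hG
  rw [ENNReal.tendsto_nhds_zero]
  by_contra hcon
  push_neg at hcon
  obtain ⟨ε, hε, hfr⟩ := hcon
  obtain ⟨tG, htG0, habsG⟩ := habs G hG
  have hfr' : ∀ k : ℕ, ∃ t : ℝ, (k + tG : ℝ) ≤ t ∧ ε < attrDist (S t '' G) A := by
    intro k
    obtain ⟨t, ht, hlt⟩ := (frequently_atTop.mp hfr) (k + tG)
    exact ⟨t, ht, hlt⟩
  choose tk htk hlt using hfr'
  have hpt : ∀ k : ℕ, ∃ g ∈ G, ε < EMetric.infEdist (S (tk k) g) A := by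
    intro k
    have := hlt k
    rw [attrDist] at this
    rw [lt_iSup_iff] at this
    obtain ⟨y, hy⟩ := this
    rw [lt_iSup_iff] at hy
    obtain ⟨hyG, hy2⟩ := hy
    obtain ⟨g, hgG, rfl⟩ := hyG
    exact ⟨g, hgG, hy2⟩
  choose g hgG hge using hpt
  set yk : ℕ → V := fun k => S tG (g k) with hyk
  have hykB : ∀ k, yk k ∈ B := fun k => habsG tG le_rfl (mem_image_of_mem _ (hgG k))
  set sk : ℕ → ℝ := fun k => tk k - tG with hsk
  have hsk0 : ∀ k, 0 ≤ sk k := by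
    intro k
    have := htk k
    simp only [hsk]
    have : (k : ℝ) + tG ≤ tk k := htk k
    have hk0 : (0:ℝ) ≤ k := Nat.cast_nonneg k
    linarith
  have hskT : Tendsto sk atTop atTop := by
    apply tendsto_atTop_mono (f := fun k : ℕ => (k:ℝ))
    · intro k
      have := htk k
      simp only [hsk]
      linarith
    · exact hcast
  have hSeq : ∀ k, S (sk k) (yk k) = S (tk k) (g k) := by
    intro k
    rw [hyk, hS.2 (sk k) tG (hsk0 k) htG0]
    congr 1
    simp [hsk]
  obtain ⟨φ, hφ, z, hz⟩ := hsc sk hsk0 hskT yk hykB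
  have hzA : z ∈ A := mem_omegaLim_of_seq (hskT.comp hφ.tendsto_atTop)
    (fun j => hykB (φ j)) hz
  have hz0 : Tendsto (fun j => EMetric.infEdist (S (sk (φ j)) (yk (φ j))) A) atTop
      (𝓝 (EMetric.infEdist z A)) :=
    (EMetric.continuous_infEdist.tendsto z).comp hz
  rw [show EMetric.infEdist z A = 0 from EMetric.infEdist_zero_of_mem hzA] at hz0
  have hev : ∀ᶠ j in atTop,
      EMetric.infEdist (S (sk (φ j)) (yk (φ j))) A < ε := hz0.eventually_lt_const hε
  obtain ⟨j, hj⟩ := hev.exists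
  rw [hSeq (φ j)] at hj
  exact absurd hj (not_lt.mpr (hge (φ j)).le)

lemma aux_thickening {S : ℝ → V → V} {K : Set V} (hne : K.Nonempty) (hK : IsCompact K)
    (hatt : AttractsSet S K) :
    (cthickening 1 K).Nonempty ∧ IsBounded (cthickening 1 K) ∧
      IsAbsorbingSet S (cthickening 1 K) ∧
      (∀ tk : ℕ → ℝ, (∀ k, 0 ≤ tk k) → Tendsto tk atTop atTop →
        ∀ xk : ℕ → V, (∀ k, xk k ∈ cthickening 1 K) →
          ∃ φ : ℕ → ℕ, StrictMono φ ∧ ∃ z : V,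
            Tendsto (fun j => S (tk (φ j)) (xk (φ j))) atTop (𝓝 z)) := by
  refine ⟨hne.mono (self_subset_cthickening K), hK.isBounded.cthickening, ?_, ?_⟩
  · intro G hG
    have h1 := ENNReal.tendsto_nhds_zero.mp (hatt G hG) 1 one_pos
    obtain ⟨t₀, ht₀⟩ := eventually_atTop.mp h1
    refine ⟨max t₀ 0, le_max_right _ _, fun t ht x hx => ?_⟩
    rw [mem_cthickening_iff, ENNReal.ofReal_one]
    exact le_trans (infEdist_le_attrDist hx) (ht₀ t (le_trans (le_max_left _ _) ht))
  · intro tk htk0 htkT xk hxk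
    have hb : Tendsto (fun k => attrDist (S (tk k) '' cthickening 1 K) K) atTop (𝓝 0) :=
      (hatt _ hK.isBounded.cthickening).comp htkT
    have hle : ∀ k, EMetric.infEdist (S (tk k) (xk k)) K ≤
        attrDist (S (tk k) '' cthickening 1 K) K :=
      fun k => infEdist_le_attrDist (mem_image_of_mem _ (hxk k))
    have h0 : Tendsto (fun k => EMetric.infEdist (S (tk k) (xk k)) K) atTop (𝓝 0) :=
      ENNReal.tendsto_nhds_zero.mpr fun ε hε =>
        (ENNReal.tendsto_nhds_zero.mp hb ε hε).mono fun k hk => (hle k).trans hk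
    have hnear : ∀ k : ℕ, ∃ y ∈ K,
        EMetric.infEdist (S (tk k) (xk k)) K = edist (S (tk k) (xk k)) y :=
      fun k => hK.exists_infEdist_eq_edist hne _
    choose a haK hae using hnear
    obtain ⟨z, hzK, φ, hφ, haz⟩ := hK.tendsto_subseq haK
    refine ⟨φ, hφ, z, ?_⟩
    have hd0 : Tendsto (fun j => dist (a (φ j)) (S (tk (φ j)) (xk (φ j)))) atTop (𝓝 0) := by
      have he : Tendsto (fun j => edist (S (tk (φ j)) (xk (φ j))) (a (φ j))) atTop (𝓝 0) := by
        have := h0.comp hφ.tendsto_atTop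
        refine this.congr fun j => ?_
        exact hae (φ j)
      have := (ENNReal.tendsto_toReal (by simp)).comp he
      simp only [ENNReal.toReal_zero] at this
      refine this.congr fun j => ?_
      simp [Function.comp, dist_edist, edist_comm]
    exact Filter.Tendsto.congr_dist haz hd0

lemma globalAttr_of_compactAttr {S : ℝ → V → V} (hS : IsSemiflow S) (hac : AsympClosed S)
    {K : Set V} (hne : K.Nonempty) (hK : IsCompact K) (hatt : AttractsSet S K) :
    IsGlobalAttr S (omegaLim S K) := by
  obtain ⟨hBne, hBbd, hBabs, hBsc⟩ := aux_thickening hne hK hatt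
  have hA := globalAttr_of_absorbing hS hac hBne hBbd hBabs hBsc
  obtain ⟨hAne, hAcp, hAinv, hAatt⟩ := hA
  set A := omegaLim S (cthickening 1 K) with hAdef
  -- A ⊆ K
  have hAK : A ⊆ K := by
    intro a ha
    have h1 : ∀ t : ℝ, 0 ≤ t → EMetric.infEdist a K ≤ attrDist (S t '' A) K := by
      intro t ht
      refine infEdist_le_attrDist ?_
      rw [hAinv t ht]; exact ha
    have h2 : Tendsto (fun t : ℝ => attrDist (S t '' A) K) atTop (𝓝 0) :=
      hatt A hAcp.isBounded
    have h3 : EMetric.infEdist a K ≤ 0 :=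
      ge_of_tendsto h2 (eventually_atTop.mpr ⟨0, fun t ht => h1 t ht⟩)
    have h4 : a ∈ closure K := EMetric.mem_closure_iff_infEdist_zero.mpr (le_antisymm h3 zero_le')
    rwa [hK.isClosed.closure_eq] at h4
  -- ω(K) = A
  have heq : omegaLim S K = A := by
    apply Subset.antisymm (omegaLim_mono (self_subset_cthickening K))
    intro a ha
    simp only [omegaLim, mem_iInter]
    intro s hs
    apply subset_closure
    refine mem_iUnion₂.2 ⟨s, le_rfl, ?_⟩
    have : a ∈ S s '' A := by rw [hAinv s hs]; exact ha
    exact image_mono hAK this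
  rw [heq]
  exact ⟨hAne, hAcp, hAinv, hAatt⟩

end Aux

section Statement0

variable {V : Type*} [MetricSpace V]

/-- Property (2): along any time sequence tending to infinity, orbits starting in `B`
have convergent subsequences. -/
def SubseqConv (S : ℝ → V → V) (B : Set V) : Prop :=
  ∀ tk : ℕ → ℝ, (∀ k, 0 ≤ tk k) → Tendsto tk atTop atTop →
    ∀ xk : ℕ → V, (∀ k, xk k ∈ B) →
      ∃ φ : ℕ → ℕ, StrictMono φ ∧ ∃ z : V,
        Tendsto (fun j => S (tk (φ j)) (xk (φ j))) atTop (𝓝 z)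

theorem existence_criterion_global_attractor
    (S : ℝ → V → V) (hS : IsSemiflow S) (hac : AsympClosed S) :
    ((∃ A : Set V, IsGlobalAttr S A) ↔
      (∃ B : Set V, B.Nonempty ∧ IsBounded B ∧ IsAbsorbingSet S B ∧ SubseqConv S B)) ∧
    ((∃ A : Set V, IsGlobalAttr S A) ↔
      (∃ K : Set V, K.Nonempty ∧ IsCompact K ∧ AttractsSet S K)) ∧
    (∀ B : Set V, B.Nonempty → IsBounded B → IsAbsorbingSet S B → SubseqConv S B →
      IsGlobalAttr S (omegaLim S B)) ∧
    (∀ K : Set V, K.Nonempty → IsCompact K → AttractsSet S K →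
      IsGlobalAttr S (omegaLim S K)) := by
  refine ⟨⟨?_, ?_⟩, ⟨?_, ?_⟩, ?_, ?_⟩
  · rintro ⟨A, hAne, hAcp, hAinv, hAatt⟩
    obtain ⟨h1, h2, h3, h4⟩ := aux_thickening hAne hAcp hAatt
    exact ⟨cthickening 1 A, h1, h2, h3, h4⟩
  · rintro ⟨B, h1, h2, h3, h4⟩
    exact ⟨omegaLim S B, globalAttr_of_absorbing hS hac h1 h2 h3 h4⟩
  · rintro ⟨A, hAne, hAcp, hAinv, hAatt⟩
    exact ⟨A, hAne, hAcp, hAatt⟩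
  · rintro ⟨K, h1, h2, h3⟩
    exact ⟨omegaLim S K, globalAttr_of_compactAttr hS hac h1 h2 h3⟩
  · exact fun B h1 h2 h3 h4 => globalAttr_of_absorbing hS hac h1 h2 h3 h4
  · exact fun K h1 h2 h3 => globalAttr_of_compactAttr hS hac h1 h2 h3

end Statement0
end

section
/- Let {S(t) : t ≥ 0} be an asymptotically closed semigroup on a complete metric space (V,d), T > 0, and let B ⊆ V be a nonempty bounded absorbing set such that N^V(S(kT)B, a·q^k) ≤ b·h^k for all integers k ≥ k₀, for some k₀ ∈ ℕ, a,b > 0, q ∈ (0,1) and h ≥ 1. Then there exists a countable set E₀ ⊆ B such that M₀ = cl_V(E₀) ⊆ B is a T-discrete exponential attractor for the semigroup which attracts at every exponential rate ξ ∈ (0, (1/T)·ln(1/q)) (i.e., for every such ξ and every bounded G ⊆ V, e^{ξt}·dist^V(S(t)G, M₀) → 0 as t → ∞), its fractal dimension satisfies dim_f^V(M₀) ≤ log_{1/q} h, and the semigroup has a global attractor A = Λ^V(M₀) with M₀ = A ∪ E₀. -/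
open Filter Metric Set Topology Bornology
open scoped ENNReal

section Helpers

variable {V : Type*} [MetricSpace V]

lemma helper_exists_net {G : Set V} {ε c : ℝ} (hc0 : 0 ≤ c)
    (hc : coverN G ε ≤ ENNReal.ofReal c) :
    ∃ F : Finset V, ↑F ⊆ G ∧ (G ⊆ ⋃ x ∈ F, ball x ε) ∧ (F.card : ℝ) ≤ c := by
  classical
  set P : Finset V → Prop := fun F => ↑F ⊆ G ∧ G ⊆ ⋃ x ∈ F, ball x ε with hP
  by_cases hne : ∃ F, P F
  · have hNne : {n : ℕ | ∃ F, P F ∧ F.card = n}.Nonempty := by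
      obtain ⟨F, hF⟩ := hne; exact ⟨F.card, F, hF, rfl⟩
    obtain ⟨F₀, hF₀, hcard⟩ := Nat.sInf_mem hNne
    refine ⟨F₀, hF₀.1, hF₀.2, ?_⟩
    have hle : (F₀.card : ℝ≥0∞) ≤ coverN G ε := by
      rw [coverN]
      refine le_iInf fun F => le_iInf fun h1 => le_iInf fun h2 => ?_
      have : sInf {n : ℕ | ∃ F, P F ∧ F.card = n} ≤ F.card :=
        Nat.sInf_le ⟨F, ⟨h1, h2⟩, rfl⟩
      rw [← hcard] at this
      exact_mod_cast this
    have h2 := hle.trans hc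
    rw [show ((F₀.card : ℝ≥0∞)) = ENNReal.ofReal (F₀.card : ℝ) by
      simp [ENNReal.ofReal_natCast]] at h2
    exact (ENNReal.ofReal_le_ofReal_iff hc0).mp h2
  · exfalso
    have hct : coverN G ε = ⊤ := by
      rw [coverN]
      simp only [iInf_eq_top]
      intro F h1 h2
      exact absurd ⟨F, h1, h2⟩ hne
    rw [hct, top_le_iff] at hc
    exact ENNReal.ofReal_ne_top hc

lemma helper_coverN_anti {G : Set V} {ε ε' : ℝ} (h : ε ≤ ε') : coverN G ε' ≤ coverN G ε := by
  rw [coverN, coverN]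
  refine le_iInf fun F => le_iInf fun h1 => le_iInf fun h2 => ?_
  refine iInf₂_le_of_le F h1 (iInf_le_of_le ?_ le_rfl)
  exact h2.trans (Set.iUnion₂_mono fun x _ => ball_subset_ball h)

lemma helper_one_le_coverN {G : Set V} (hG : G.Nonempty) (ε : ℝ) : 1 ≤ coverN G ε := by
  rw [coverN]
  refine le_iInf fun F => le_iInf fun h1 => le_iInf fun h2 => ?_
  obtain ⟨x, hx⟩ := hG
  have := h2 hx
  simp only [Set.mem_iUnion] at this
  obtain ⟨y, hy, -⟩ := this
  have : 0 < F.card := Finset.card_pos.mpr ⟨y, hy⟩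
  exact_mod_cast this

lemma helper_coverN_le_of_cover {M : Set V} {F : Finset V} {r : ℝ}
    (hcov : M ⊆ ⋃ x ∈ F, ball x r) :
    coverN M (2 * r) ≤ F.card := by
  classical
  set p : V → V := fun x =>
    if h : (M ∩ ball x r).Nonempty then h.choose else x with hp
  set F₂ : Finset V := (F.filter fun x => (M ∩ ball x r).Nonempty).image p with hF₂
  have hF₂sub : ↑F₂ ⊆ M := by
    intro y hy
    simp only [hF₂, Finset.coe_image, Set.mem_image, Finset.mem_coe,
      Finset.mem_filter] at hy
    obtain ⟨x, ⟨-, hne⟩, rfl⟩ := hy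
    simp only [hp, dif_pos hne]
    exact hne.choose_spec.1
  have hF₂cov : M ⊆ ⋃ x ∈ F₂, ball x (2 * r) := by
    intro y hy
    obtain ⟨x, hxF, hyx⟩ := by
      have := hcov hy
      simp only [Set.mem_iUnion, exists_prop] at this
      exact this
    have hne : (M ∩ ball x r).Nonempty := ⟨y, hy, hyx⟩
    have hpx : p x ∈ M ∩ ball x r := by
      simp only [hp, dif_pos hne]; exact hne.choose_spec
    simp only [Set.mem_iUnion, exists_prop]
    refine ⟨p x, Finset.mem_image_of_mem p (Finset.mem_filter.mpr ⟨hxF, hne⟩), ?_⟩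
    rw [mem_ball] at *
    calc dist y (p x) ≤ dist y x + dist x (p x) := dist_triangle _ _ _
      _ < r + r := add_lt_add hyx (by rw [dist_comm]; exact hpx.2)
      _ = 2 * r := by ring
  calc coverN M (2 * r) ≤ (F₂.card : ℝ≥0∞) := by
        rw [coverN]; exact iInf₂_le_of_le F₂ hF₂sub (iInf_le_of_le hF₂cov le_rfl)
    _ ≤ (F.card : ℝ≥0∞) := by
        exact_mod_cast Nat.cast_le.mpr ((Finset.card_image_le).trans
          (Finset.card_filter_le _ _))

lemma helper_subseq {M : Set V} (hM : IsCompact M) (v : ℕ → V)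
    (hv : Tendsto (fun n => EMetric.infEdist (v n) M) atTop (𝓝 0)) :
    ∃ φ : ℕ → ℕ, StrictMono φ ∧ ∃ p ∈ M, Tendsto (v ∘ φ) atTop (𝓝 p) := by
  have hMne : M.Nonempty := by
    by_contra hne
    rw [Set.not_nonempty_iff_eq_empty] at hne
    subst hne
    simp only [EMetric.infEdist, Metric.infEDist_empty] at hv
    have : (⊤:ℝ≥0∞) = 0 := tendsto_nhds_unique tendsto_const_nhds hv
    simp at this
  -- choose near points
  have hch : ∀ n : ℕ, ∃ y ∈ M,
      edist (v n) y < EMetric.infEdist (v n) M + (((n+1 : ℕ) : ℝ≥0∞))⁻¹ := by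
    intro n
    apply EMetric.infEdist_lt_iff.mp
    have h1 : EMetric.infEdist (v n) M ≠ ⊤ := by
      obtain ⟨y, hy⟩ := hMne
      exact ne_top_of_le_ne_top (edist_ne_top _ _) (EMetric.infEdist_le_edist_of_mem hy)
    exact ENNReal.lt_add_right h1 (by simp)
  choose w hwM hwd using hch
  obtain ⟨p, hpM, φ, hφ, hconv⟩ := hM.tendsto_subseq hwM
  refine ⟨φ, hφ, p, hpM, ?_⟩
  have hd0 : Tendsto (fun n => edist (v n) (w n)) atTop (𝓝 0) := by
    have hup : Tendsto (fun n : ℕ => EMetric.infEdist (v n) M + (((n+1 : ℕ) : ℝ≥0∞))⁻¹)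
        atTop (𝓝 0) := by
      rw [show (0:ℝ≥0∞) = 0 + 0 by simp]
      exact hv.add (ENNReal.tendsto_inv_nat_nhds_zero.comp (tendsto_add_atTop_nat 1))
    exact tendsto_of_tendsto_of_tendsto_of_le_of_le' tendsto_const_nhds hup
      (Eventually.of_forall fun n => zero_le)
      (Eventually.of_forall fun n => (hwd n).le)
  have hd0' : Tendsto (fun n => edist ((v ∘ φ) n) ((w ∘ φ) n)) atTop (𝓝 0) :=
    hd0.comp (hφ.tendsto_atTop)
  -- v ∘ φ → p
  rw [tendsto_iff_edist_tendsto_0] at hconv ⊢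
  have : ∀ n, edist ((v ∘ φ) n) p ≤ edist ((v ∘ φ) n) ((w ∘ φ) n) + edist ((w ∘ φ) n) p :=
    fun n => edist_triangle _ _ _
  refine tendsto_of_tendsto_of_tendsto_of_le_of_le' tendsto_const_nhds ?_
    (Eventually.of_forall fun n => zero_le) (Eventually.of_forall this)
  rw [show (0:ℝ≥0∞) = 0 + 0 by simp]
  exact hd0'.add hconv

lemma helper_dichotomy (j : ℕ → ℕ) :
    (∃ J, {n | j n = J}.Infinite) ∨ Tendsto j atTop atTop := by
  by_cases h : Tendsto j atTop atTop
  · exact Or.inr h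
  left
  rw [tendsto_atTop_atTop] at h
  push_neg at h
  obtain ⟨b, hb⟩ := h
  have hinf : {n | j n < b}.Infinite := by
    rw [← Nat.frequently_atTop_iff_infinite, frequently_atTop]
    intro N
    obtain ⟨n, hn, hnb⟩ := hb N
    exact ⟨n, hn, hnb⟩
  by_contra hc
  push_neg at hc
  have : {n | j n < b} ⊆ ⋃ J ∈ Finset.range b, {n | j n = J} := by
    intro n hn
    simp only [Set.mem_iUnion, exists_prop, Finset.mem_range]
    exact ⟨j n, hn, rfl⟩
  exact hinf ((Set.Finite.biUnion (Finset.range b).finite_toSet fun J _ => hc J).subset this)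

end Helpers
section Helpers2

variable {V : Type*} [MetricSpace V]

lemma helper_mem_omegaLim {S : ℝ → V → V} {G : Set V} {x : V} (tn : ℕ → ℝ) (mn : ℕ → V)
    (htn : Tendsto tn atTop atTop) (hmn : ∀ n, mn n ∈ G)
    (hconv : Tendsto (fun n => S (tn n) (mn n)) atTop (𝓝 x)) : x ∈ omegaLim S G := by
  rw [omegaLim]
  simp only [Set.mem_iInter]
  intro s hs
  refine mem_closure_of_tendsto hconv ?_
  have h1 := htn.eventually_ge_atTop s
  filter_upwards [h1] with n hn
  exact Set.mem_iUnion.mpr ⟨tn n, Set.mem_iUnion.mpr ⟨hn, Set.mem_image_of_mem _ (hmn n)⟩⟩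

lemma helper_omegaLim_char {S : ℝ → V → V} {G : Set V} {x : V} (hx : x ∈ omegaLim S G) :
    ∃ tn : ℕ → ℝ, ∃ mn : ℕ → V, (∀ n : ℕ, (n:ℝ) ≤ tn n) ∧ (∀ n, mn n ∈ G) ∧
      Tendsto (fun n => S (tn n) (mn n)) atTop (𝓝 x) := by
  rw [omegaLim] at hx
  simp only [Set.mem_iInter] at hx
  have h : ∀ n : ℕ, ∃ t : ℝ, ∃ m : V, (n:ℝ) ≤ t ∧ m ∈ G ∧
      dist x (S t m) < 1 / (n + 1) := by
    intro n
    have hxn := hx (n : ℝ) (Nat.cast_nonneg n)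
    rw [Metric.mem_closure_iff] at hxn
    obtain ⟨y, hy, hd⟩ := hxn (1 / (n + 1)) (by positivity)
    simp only [Set.mem_iUnion] at hy
    obtain ⟨t, ht, m, hm, rfl⟩ := hy
    exact ⟨t, m, ht, hm, hd⟩
  choose tn mn htn hmn hd using h
  refine ⟨tn, mn, htn, hmn, ?_⟩
  rw [tendsto_iff_dist_tendsto_zero]
  refine squeeze_zero' (Eventually.of_forall fun n => dist_nonneg)
    (Eventually.of_forall fun n => ?_) tendsto_one_div_add_atTop_nhds_zero_nat
  rw [dist_comm]
  exact (hd n).le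

lemma helper_image_comp {S : ℝ → V → V} (hS : IsSemiflow S) {t r : ℝ} (ht : 0 ≤ t)
    (hr : 0 ≤ r) (B : Set V) : S t '' (S r '' B) = S (t + r) '' B := by
  rw [← Set.image_comp]
  exact Set.image_congr fun x _ => hS.2 t r ht hr x

lemma helper_attrDist_le {G' A : Set V} {c : ℝ≥0∞} (h : ∀ x ∈ G', EMetric.infEdist x A ≤ c) :
    attrDist G' A ≤ c := iSup₂_le h

lemma helper_infEdist_le_attrDist {G' A : Set V} {x : V} (hx : x ∈ G') :
    EMetric.infEdist x A ≤ attrDist G' A := le_iSup₂ (f := fun x _ => EMetric.infEdist x A) x hx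

end Helpers2
section Statement2

variable {V : Type*} [MetricSpace V]

set_option maxHeartbeats 3000000 in
theorem construction_Tdiscrete_exponential_attractor
    [CompleteSpace V] (S : ℝ → V → V) (hS : IsSemiflow S) (hac : AsympClosed S)
    (T : ℝ) (hT : 0 < T)
    (B : Set V) (hBne : B.Nonempty) (hBbdd : IsBounded B) (hBabs : IsAbsorbingSet S B)
    (k₀ : ℕ) (a b q h : ℝ) (ha : 0 < a) (hb : 0 < b) (hq0 : 0 < q) (hq1 : q < 1)
    (hh : 1 ≤ h) (hcov : CoveringCond S T B k₀ a b q h) :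
    ∃ E₀ : Set V, E₀.Countable ∧ E₀ ⊆ B ∧ closure E₀ ⊆ B ∧
      IsDiscExpAttr S T (closure E₀) ∧
      (∀ ξ : ℝ, 0 < ξ → ξ < 1 / T * Real.log (1 / q) → ExpAttractsAt S (closure E₀) ξ) ∧
      fracDim (closure E₀) ≤ ENNReal.ofReal (Real.log h / Real.log (1 / q)) ∧
      IsGlobalAttr S (omegaLim S (closure E₀)) ∧
      closure E₀ = omegaLim S (closure E₀) ∪ E₀ := by
  classical
  obtain ⟨hS0, hSc⟩ := id hS
  obtain ⟨tB, htB0, htB⟩ := hBabs B hBbdd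
  set k₁ : ℕ := max k₀ (⌈tB / T⌉₊ + 1) with hk₁def
  have hk₁0 : k₀ ≤ k₁ := le_max_left _ _
  have hk₁T : tB ≤ (k₁ : ℝ) * T := by
    have h1 : tB / T ≤ ((⌈tB / T⌉₊ : ℕ) : ℝ) := Nat.le_ceil _
    have h3 : tB ≤ ((⌈tB / T⌉₊ : ℕ) : ℝ) * T := (div_le_iff₀ hT).mp h1
    refine h3.trans (mul_le_mul_of_nonneg_right ?_ hT.le)
    exact_mod_cast (Nat.le_succ _).trans (le_max_right _ _)
  have hSBsub : ∀ r : ℝ, (k₁ : ℝ) * T ≤ r → S r '' B ⊆ B := fun r hr => htB r (hk₁T.trans hr)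
  -- the nets
  have hFex : ∀ k : ℕ, ∃ F : Finset V, k₀ ≤ k →
      ((F : Set V) ⊆ S ((k : ℝ) * T) '' B ∧
        (S ((k : ℝ) * T) '' B ⊆ ⋃ x ∈ F, ball x (a * q ^ k)) ∧
        (F.card : ℝ) ≤ b * h ^ k) := by
    intro k
    by_cases hk : k₀ ≤ k
    · obtain ⟨F, h1, h2, h3⟩ := helper_exists_net (by positivity) (hcov k hk)
      exact ⟨F, fun _ => ⟨h1, h2, h3⟩⟩
    · exact ⟨∅, fun hk' => absurd hk' hk⟩
  choose F hF using hFex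
  -- the recursive sets W j  (representing level k₁ + j)
  set W : ℕ → Finset V :=
    fun j => Nat.rec (F k₁) (fun j Wj => F (k₁ + j + 1) ∪ Wj.image (S T)) j with hWdef
  have hWsucc : ∀ j, W (j + 1) = F (k₁ + j + 1) ∪ (W j).image (S T) := fun j => rfl
  have hWsub : ∀ j : ℕ, (W j : Set V) ⊆ S (((k₁ + j : ℕ) : ℝ) * T) '' B := by
    intro j
    induction j with
    | zero => rw [Nat.add_zero]; exact (hF k₁ hk₁0).1
    | succ j ih =>
      rw [hWsucc]
      intro x hx
      rw [Finset.coe_union, Set.mem_union] at hx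
      rcases hx with hx | hx
      · have h2 := (hF (k₁ + j + 1) (by omega)).1 hx
        exact h2
      · simp only [Finset.coe_image, Set.mem_image] at hx
        obtain ⟨y, hy, rfl⟩ := hx
        obtain ⟨z, hz, rfl⟩ := ih hy
        refine ⟨z, hz, ?_⟩
        rw [hSc T _ hT.le (by positivity) z]
        congr 1
        push_cast; ring
  have hk₁j : ∀ j : ℕ, (k₁ : ℝ) * T ≤ ((k₁ + j : ℕ) : ℝ) * T := by
    intro j
    refine mul_le_mul_of_nonneg_right ?_ hT.le
    exact_mod_cast Nat.le_add_right _ _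
  have hWB : ∀ j : ℕ, (W j : Set V) ⊆ B := fun j =>
    (hWsub j).trans (hSBsub _ (hk₁j j))
  have hFW : ∀ i : ℕ, (F (k₁ + i) : Set V) ⊆ (W i : Set V) := by
    intro i
    cases i with
    | zero => simp [hWdef]
    | succ i =>
      rw [hWsucc]
      intro x hx
      rw [Finset.coe_union, Set.mem_union]
      exact Or.inl hx
  set E₀ : Set V := ⋃ j, (W j : Set V) with hE₀def
  set M₀ : Set V := closure E₀ with hM₀def
  have hE₀B : E₀ ⊆ B := Set.iUnion_subset hWB
  have hE₀cnt : E₀.Countable := Set.countable_iUnion fun j => (W j).countable_toSet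
  have hE₀M₀ : E₀ ⊆ M₀ := subset_closure
  have hWE₀ : ∀ j, (W j : Set V) ⊆ E₀ := fun j => Set.subset_iUnion (fun j => (W j : Set V)) j
  -- tail inclusion
  have hTail : ∀ m j : ℕ, m + k₁ ≤ j → (W j : Set V) ⊆ S (((k₁ + m : ℕ) : ℝ) * T) '' B := by
    intro m j hmj
    refine (hWsub j).trans ?_
    have heq : ((k₁ + j : ℕ) : ℝ) * T = ((k₁ + m : ℕ) : ℝ) * T + ((j : ℝ) - m) * T := by
      push_cast; ring
    have hjm : (0 : ℝ) ≤ ((j : ℝ) - m) := by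
      have : (m : ℝ) ≤ j := by exact_mod_cast le_trans (Nat.le_add_right m k₁) hmj
      linarith
    rw [heq, ← helper_image_comp hS (by positivity) (by positivity)]
    refine Set.image_mono ?_
    refine hSBsub _ ?_
    refine mul_le_mul_of_nonneg_right ?_ hT.le
    have : (k₁ : ℝ) + m ≤ (j : ℝ) := by exact_mod_cast by omega
    linarith
  have hNetTail : ∀ m j : ℕ, m + k₁ ≤ j →
      (W j : Set V) ⊆ ⋃ x ∈ F (k₁ + m), ball x (a * q ^ (k₁ + m)) := fun m j hmj =>
    (hTail m j hmj).trans (hF (k₁ + m) (by omega)).2.1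
  -- small radii
  have hradius : Tendsto (fun m : ℕ => a * q ^ (k₁ + m)) atTop (𝓝 0) := by
    have h1 : Tendsto (fun m : ℕ => q ^ m) atTop (𝓝 0) :=
      tendsto_pow_atTop_nhds_zero_of_lt_one hq0.le hq1
    have h2 : Tendsto (fun m : ℕ => a * q ^ (k₁ + m)) atTop (𝓝 (a * q ^ k₁ * 0)) := by
      have := h1.const_mul (a * q ^ k₁)
      simpa [pow_add, mul_assoc] using this
    simpa using h2
  -- total boundedness and compactness
  have hTB : TotallyBounded E₀ := by
    rw [Metric.totallyBounded_iff]
    intro ε hε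
    obtain ⟨m, hm⟩ : ∃ m : ℕ, a * q ^ (k₁ + m) < ε := by
      have := hradius.eventually_lt_const hε
      exact this.exists
    refine ⟨↑((Finset.range (m + k₁)).biUnion W ∪ F (k₁ + m)), Finset.finite_toSet _, ?_⟩
    intro x hx
    obtain ⟨j, hj⟩ := Set.mem_iUnion.mp hx
    by_cases hjm : j < m + k₁
    · refine Set.mem_biUnion ?_ (mem_ball_self hε)
      simp only [Finset.coe_union, Set.mem_union, Finset.mem_coe, Finset.mem_biUnion]
      exact Or.inl ⟨j, Finset.mem_range.mpr hjm, hj⟩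
    · have h2 := hNetTail m j (by omega) hj
      simp only [Set.mem_iUnion, exists_prop] at h2
      obtain ⟨y, hy, hxy⟩ := h2
      refine Set.mem_biUnion ?_ (ball_subset_ball hm.le hxy)
      simp only [Finset.coe_union, Set.mem_union, Finset.mem_coe]
      exact Or.inr hy
  have hM₀comp : IsCompact M₀ :=
    hTB.closure.isCompact_of_isClosed isClosed_closure
  have hM₀closed : IsClosed M₀ := isClosed_closure
  have hE₀ne : E₀.Nonempty := by
    obtain ⟨x, hx⟩ := hBne
    have h1 : S ((k₁ : ℝ) * T) x ∈ S ((k₁ : ℝ) * T) '' B := Set.mem_image_of_mem _ hx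
    have h2 := (hF k₁ hk₁0).2.1 h1
    simp only [Set.mem_iUnion, exists_prop] at h2
    obtain ⟨y, hy, -⟩ := h2
    have : (F k₁ : Set V) ⊆ E₀ := by
      have := hFW 0
      simpa using this.trans (hWE₀ 0)
    exact ⟨y, this hy⟩
  have hM₀ne : M₀.Nonempty := hE₀ne.closure
  have hM₀bdd : IsBounded M₀ := (hBbdd.closure).subset (closure_mono hE₀B)
  -- S T maps E₀ into E₀
  have hSTE₀ : ∀ x ∈ E₀, S T x ∈ E₀ := by
    intro x hx
    obtain ⟨j, hj⟩ := Set.mem_iUnion.mp hx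
    refine Set.mem_iUnion.mpr ⟨j + 1, ?_⟩
    rw [hWsucc]
    rw [Finset.coe_union, Set.mem_union]
    exact Or.inr (by
      simp only [Finset.coe_image, Set.mem_image]
      exact ⟨x, hj, rfl⟩)
  -- level decomposition of points of E₀ and dichotomy-based closedness argument
  have hSTM₀ : S T '' M₀ ⊆ M₀ := by
    rintro - ⟨x, hx, rfl⟩
    obtain ⟨xs, hxsE, hxs⟩ := mem_closure_iff_seq_limit.mp hx
    have hlev : ∀ n, ∃ j, xs n ∈ (W j : Set V) := fun n => Set.mem_iUnion.mp (hxsE n)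
    choose jn hjn using hlev
    rcases helper_dichotomy jn with ⟨J, hJ⟩ | hjtop
    · -- constant level: x itself is in the finite set W J
      have hxW : x ∈ (W J : Set V) := by
        have hclosed : IsClosed (W J : Set V) := (W J).finite_toSet.isClosed
        refine hclosed.mem_of_frequently_of_tendsto ?_ hxs
        rw [Nat.frequently_atTop_iff_infinite]
        refine hJ.mono fun n hn => ?_
        rw [← hn]; exact hjn n
      exact hE₀M₀ (hSTE₀ x (hWE₀ J hxW))
    · -- levels tend to infinity
      have hyex : ∀ n, ∃ y ∈ B, S (((k₁ + jn n : ℕ) : ℝ) * T) y = xs n := by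
        intro n
        obtain ⟨y, hy, hxy⟩ := hWsub (jn n) (hjn n)
        exact ⟨y, hy, hxy⟩
      choose yn hynB hynS using hyex
      set tn : ℕ → ℝ := fun n => ((k₁ + jn n : ℕ) : ℝ) * T with htndef
      have htn0 : ∀ n, 0 ≤ tn n := fun n => by positivity
      have htntop : Tendsto tn atTop atTop := by
        have h1 : Tendsto (fun n => (k₁ + jn n : ℕ)) atTop atTop :=
          tendsto_atTop_mono (fun n => Nat.le_add_left (jn n) k₁) hjtop
        have h2 : Tendsto (fun n => ((k₁ + jn n : ℕ) : ℝ)) atTop atTop :=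
          tendsto_natCast_atTop_atTop.comp h1
        exact h2.atTop_mul_const hT
      have hzn : ∀ n, S T (xs n) ∈ M₀ := fun n => hE₀M₀ (hSTE₀ _ (hxsE n))
      obtain ⟨p, hpM, φ, hφ, hconv⟩ := hM₀comp.tendsto_subseq hzn
      have heq : S T x = p := by
        refine hac T hT.le (tn ∘ φ) (fun n => htn0 _) (htntop.comp hφ.tendsto_atTop)
          (yn ∘ φ) (hBbdd.subset (Set.range_subset_iff.mpr fun n => hynB _)) x p ?_ ?_
        · have : (fun n => S ((tn ∘ φ) n) ((yn ∘ φ) n)) = (fun n => xs (φ n)) := by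
            funext n; exact hynS (φ n)
          rw [this]
          exact hxs.comp hφ.tendsto_atTop
        · have : (fun n => S (T + (tn ∘ φ) n) ((yn ∘ φ) n)) = (fun n => S T (xs (φ n))) := by
            funext n
            rw [← hynS (φ n), hSc T (tn (φ n)) hT.le (htn0 (φ n))]
            rfl
          rw [this]
          exact hconv
      rw [heq]; exact hpM

  -- exponential attraction
  have hq1' : 1 < 1 / q := by rw [lt_div_iff₀ hq0]; linarith
  have hlogq : 0 < Real.log (1 / q) := Real.log_pos hq1'
  have hlogq' : Real.log (1 / q) = -Real.log q := by rw [one_div, Real.log_inv]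
  have hexp : ∀ ξ : ℝ, 0 < ξ → ξ < 1 / T * Real.log (1 / q) → ExpAttractsAt S M₀ ξ := by
    intro ξ hξ0 hξ G hG
    obtain ⟨tG, htG0, htG⟩ := hBabs G hG
    set kf : ℝ → ℕ := fun t => ⌊(t - tG) / T⌋₊ with hkf
    have hbd : ∀ t : ℝ, tG + ((k₁ + 1 : ℕ) : ℝ) * T ≤ t →
        attrDist (S t '' G) M₀ ≤ ENNReal.ofReal (a * q ^ (kf t)) := by
      intro t ht
      have hT' : (0:ℝ) < ((k₁ + 1 : ℕ) : ℝ) * T := by positivity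
      have ht0 : 0 ≤ t := by linarith
      have hkk : k₁ + 1 ≤ kf t := by
        apply Nat.le_floor
        rw [le_div_iff₀ hT]
        push_cast
        push_cast at ht
        linarith
      have hkT : (kf t : ℝ) * T ≤ t - tG := by
        rw [← le_div_iff₀ hT]
        exact Nat.floor_le (by rw [le_div_iff₀ hT]; push_cast at ht ⊢; nlinarith)
      refine helper_attrDist_le ?_
      rintro - ⟨g, hg, rfl⟩
      have hs0 : tG ≤ t - (kf t : ℝ) * T := by linarith
      have hsplit : S t g = S ((kf t : ℝ) * T) (S (t - (kf t : ℝ) * T) g) := by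
        rw [hSc _ _ (by positivity) (by linarith)]
        congr 1; ring
      have hmem : S (t - (kf t : ℝ) * T) g ∈ B := htG _ hs0 (Set.mem_image_of_mem _ hg)
      have hmem2 : S t g ∈ S ((kf t : ℝ) * T) '' B := by
        rw [hsplit]; exact Set.mem_image_of_mem _ hmem
      have hcov2 := (hF (kf t) (by omega)).2.1 hmem2
      simp only [Set.mem_iUnion, exists_prop] at hcov2
      obtain ⟨w, hw, hdw⟩ := hcov2
      have hwE : w ∈ E₀ := by
        have h5 := hFW (kf t - k₁)
        rw [show k₁ + (kf t - k₁) = kf t by omega] at h5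
        exact hWE₀ _ (h5 hw)
      calc EMetric.infEdist (S t g) M₀ ≤ edist (S t g) w :=
            EMetric.infEdist_le_edist_of_mem (hE₀M₀ hwE)
        _ ≤ ENNReal.ofReal (a * q ^ kf t) := by
            rw [edist_dist]
            exact ENNReal.ofReal_le_ofReal (mem_ball.mp hdw).le
    -- the real-valued upper bound tends to 0
    set α : ℝ := ξ + Real.log q / T with hα
    have hαneg : α < 0 := by
      have h2 : ξ < Real.log (1 / q) / T := by rw [← one_div_mul_eq_div]; exact hξ
      rw [hlogq', neg_div] at h2
      rw [hα]
      linarith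
    set β : ℝ := (-(tG / T) - 1) * Real.log q with hβ
    have hub : ∀ t : ℝ, Real.exp (ξ * t) * (a * q ^ (kf t)) ≤
        a * Real.exp (α * t + β) := by
      intro t
      have hqpow : q ^ (kf t) = Real.exp ((kf t : ℝ) * Real.log q) := by
        rw [← Real.log_pow, Real.exp_log (by positivity)]
      have hflt : (t - tG) / T - 1 < (kf t : ℝ) := by
        have := Nat.lt_floor_add_one ((t - tG) / T)
        push_cast
        linarith
      have hlogle : (kf t : ℝ) * Real.log q ≤ ((t - tG) / T - 1) * Real.log q :=
        mul_le_mul_of_nonpos_right hflt.le (Real.log_nonpos hq0.le hq1.le)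
      calc Real.exp (ξ * t) * (a * q ^ (kf t))
          = a * Real.exp (ξ * t + (kf t : ℝ) * Real.log q) := by
            rw [hqpow, Real.exp_add]; ring
        _ ≤ a * Real.exp (ξ * t + ((t - tG) / T - 1) * Real.log q) := by
            have := Real.exp_le_exp.mpr (by linarith : ξ * t + (kf t : ℝ) * Real.log q ≤
              ξ * t + ((t - tG) / T - 1) * Real.log q)
            nlinarith [this, ha.le]
        _ = a * Real.exp (α * t + β) := by
            congr 1
            rw [hα, hβ]
            ring
    have hrhs : Tendsto (fun t : ℝ => a * Real.exp (α * t + β)) atTop (𝓝 0) := by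
      have h1 : Tendsto (fun t : ℝ => α * t + β) atTop atBot := by
        apply tendsto_atBot_add_const_right
        exact (tendsto_const_mul_atBot_of_neg hαneg).mpr tendsto_id
      have h2 : Tendsto (fun t : ℝ => Real.exp (α * t + β)) atTop (𝓝 0) :=
        Real.tendsto_exp_atBot.comp h1
      have := h2.const_mul a
      simpa using this
    have hreal : Tendsto (fun t : ℝ => Real.exp (ξ * t) * (a * q ^ (kf t))) atTop (𝓝 0) :=
      squeeze_zero' (Eventually.of_forall fun t => by positivity)
        (Eventually.of_forall hub) hrhs
    -- assemble in ℝ≥0∞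
    have hupper : Tendsto (fun t : ℝ => ENNReal.ofReal (Real.exp (ξ * t) * (a * q ^ (kf t))))
        atTop (𝓝 0) := by
      have := ENNReal.tendsto_ofReal hreal
      simpa using this
    refine tendsto_of_tendsto_of_tendsto_of_le_of_le' tendsto_const_nhds hupper
      (Eventually.of_forall fun t => zero_le) ?_
    · filter_upwards [eventually_ge_atTop (tG + ((k₁ + 1 : ℕ) : ℝ) * T)] with t ht
      have h1 := hbd t ht
      calc ENNReal.ofReal (Real.exp (ξ * t)) * attrDist (S t '' G) M₀
          ≤ ENNReal.ofReal (Real.exp (ξ * t)) * ENNReal.ofReal (a * q ^ (kf t)) :=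
            by gcongr
        _ = ENNReal.ofReal (Real.exp (ξ * t) * (a * q ^ (kf t))) := by
            rw [ENNReal.ofReal_mul (Real.exp_nonneg _)]
  -- a particular admissible rate
  set ξ₀ : ℝ := 1 / T * Real.log (1 / q) / 2 with hξ₀def
  have hξ₀pos : 0 < ξ₀ := by
    rw [hξ₀def]
    positivity
  have hξ₀lt : ξ₀ < 1 / T * Real.log (1 / q) := by
    rw [hξ₀def]
    have : 0 < 1 / T * Real.log (1 / q) := by positivity
    linarith
  -- plain attraction of M₀
  have hMattr : AttractsSet S M₀ := by
    intro G hG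
    have h1 := hexp ξ₀ hξ₀pos hξ₀lt G hG
    refine tendsto_of_tendsto_of_tendsto_of_le_of_le' tendsto_const_nhds h1
      (Eventually.of_forall fun t => zero_le) ?_
    filter_upwards [eventually_ge_atTop (0:ℝ)] with t ht
    have hone : (1:ℝ≥0∞) ≤ ENNReal.ofReal (Real.exp (ξ₀ * t)) := by
      rw [show (1:ℝ≥0∞) = ENNReal.ofReal 1 by simp]
      exact ENNReal.ofReal_le_ofReal (Real.one_le_exp (by positivity))
    exact le_mul_of_one_le_left zero_le hone

  -- engine lemmas
  have lemA : ∀ (G : Set V), IsBounded G → ∀ (gn : ℕ → V), (∀ n, gn n ∈ G) →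
      ∀ (tn : ℕ → ℝ), Tendsto tn atTop atTop →
      Tendsto (fun n => EMetric.infEdist (S (tn n) (gn n)) M₀) atTop (𝓝 0) := by
    intro G hG gn hgn tn htn
    have h1 : Tendsto (fun n => attrDist (S (tn n) '' G) M₀) atTop (𝓝 0) :=
      (hMattr G hG).comp htn
    exact tendsto_of_tendsto_of_tendsto_of_le_of_le' tendsto_const_nhds h1
      (Eventually.of_forall fun n => zero_le)
      (Eventually.of_forall fun n =>
        helper_infEdist_le_attrDist (Set.mem_image_of_mem _ (hgn n)))
  have lemB : ∀ (G : Set V), IsBounded G → ∀ (gn : ℕ → V), (∀ n, gn n ∈ G) →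
      ∀ (tn : ℕ → ℝ), Tendsto tn atTop atTop →
      ∃ φ : ℕ → ℕ, StrictMono φ ∧ ∃ p ∈ M₀,
        Tendsto (fun n => S (tn (φ n)) (gn (φ n))) atTop (𝓝 p) := by
    intro G hG gn hgn tn htn
    obtain ⟨φ, hφ, p, hp, hconv⟩ := helper_subseq hM₀comp _ (lemA G hG gn hgn tn htn)
    exact ⟨φ, hφ, p, hp, hconv⟩
  set Λ : Set V := omegaLim S M₀ with hΛdef
  have hΛmem : ∀ (tn : ℕ → ℝ) (mn : ℕ → V), Tendsto tn atTop atTop → (∀ n, mn n ∈ M₀) →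
      ∀ {x : V}, Tendsto (fun n => S (tn n) (mn n)) atTop (𝓝 x) → x ∈ Λ :=
    fun tn mn htn hmn {x} hx => helper_mem_omegaLim tn mn htn hmn hx
  have hΛsub : Λ ⊆ M₀ := by
    intro x hx
    obtain ⟨tn, mn, htn, hmn, hconv⟩ := helper_omegaLim_char hx
    have htn' : Tendsto tn atTop atTop := tendsto_atTop_mono htn tendsto_natCast_atTop_atTop
    obtain ⟨φ, hφ, p, hp, hconv2⟩ := lemB M₀ hM₀bdd mn hmn tn htn'
    have hxp : x = p := tendsto_nhds_unique (hconv.comp hφ.tendsto_atTop) hconv2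
    rw [hxp]; exact hp
  have hΛclosed : IsClosed Λ := by
    rw [hΛdef, omegaLim]
    exact isClosed_iInter fun s => isClosed_iInter fun _ => isClosed_closure
  have hΛcomp : IsCompact Λ := hM₀comp.of_isClosed_subset hΛclosed hΛsub
  have hΛne : Λ.Nonempty := by
    obtain ⟨x₀, hx₀⟩ := hM₀ne
    have horb : ∀ n : ℕ, S ((n : ℝ) * T) x₀ ∈ M₀ := by
      intro n
      induction n with
      | zero => simpa [hS0] using hx₀
      | succ n ih =>
        have hrw : S (((n + 1 : ℕ) : ℝ) * T) x₀ = S T (S ((n : ℝ) * T) x₀) := by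
          rw [hSc T _ hT.le (by positivity)]
          congr 1; push_cast; ring
        rw [hrw]
        exact hSTM₀ (Set.mem_image_of_mem _ ih)
    obtain ⟨p, hpM, φ, hφ, hconv⟩ := hM₀comp.tendsto_subseq horb
    refine ⟨p, hΛmem (fun n => ((φ n : ℕ) : ℝ) * T) (fun _ => x₀) ?_ (fun _ => hx₀) hconv⟩
    exact (tendsto_natCast_atTop_atTop.comp hφ.tendsto_atTop).atTop_mul_const hT
  have hΛinv : ∀ t : ℝ, 0 ≤ t → S t '' Λ = Λ := by
    intro t ht
    apply Set.Subset.antisymm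
    · rintro - ⟨x, hx, rfl⟩
      obtain ⟨tn, mn, htn, hmn, hconv⟩ := helper_omegaLim_char hx
      have htn' : Tendsto tn atTop atTop := tendsto_atTop_mono htn tendsto_natCast_atTop_atTop
      have htn0 : ∀ n, 0 ≤ tn n := fun n => (Nat.cast_nonneg n).trans (htn n)
      have httn : Tendsto (fun n => t + tn n) atTop atTop :=
        tendsto_atTop_add_const_left _ t htn'
      obtain ⟨φ, hφ, p, hp, hconv2⟩ := lemB M₀ hM₀bdd mn hmn (fun n => t + tn n) httn
      have heq : S t x = p :=
        hac t ht (fun n => tn (φ n)) (fun n => htn0 _) (htn'.comp hφ.tendsto_atTop)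
          (fun n => mn (φ n)) (hM₀bdd.subset (Set.range_subset_iff.mpr fun n => hmn _))
          x p (hconv.comp hφ.tendsto_atTop) hconv2
      rw [heq]
      exact hΛmem _ _ (httn.comp hφ.tendsto_atTop) (fun n => hmn _) hconv2
    · intro x hx
      obtain ⟨tn, mn, htn, hmn, hconv⟩ := helper_omegaLim_char hx
      set n₀ : ℕ := ⌈t⌉₊ with hn₀
      set tn' : ℕ → ℝ := fun n => tn (n + n₀) - t with htn'def
      have hcast : ∀ n : ℕ, ((n : ℝ)) ≤ ((n + n₀ : ℕ) : ℝ) := by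
        intro n; exact_mod_cast Nat.le_add_right _ _
      have htn'0 : ∀ n, 0 ≤ tn' n := by
        intro n
        have h1 : ((n + n₀ : ℕ) : ℝ) ≤ tn (n + n₀) := htn _
        have h2 : t ≤ (n₀ : ℝ) := Nat.le_ceil t
        have h3 : (n₀ : ℝ) ≤ ((n + n₀ : ℕ) : ℝ) := by exact_mod_cast Nat.le_add_left _ _
        simp only [htn'def]; linarith
      have htn'top : Tendsto tn' atTop atTop := by
        apply tendsto_atTop_add_const_right
        exact tendsto_atTop_mono (fun n => (hcast n).trans (htn (n + n₀)))
          tendsto_natCast_atTop_atTop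
      obtain ⟨φ, hφ, z, hz, hconv2⟩ :=
        lemB M₀ hM₀bdd (fun n => mn (n + n₀)) (fun n => hmn _) tn' htn'top
      have heq : S t z = x := by
        refine hac t ht (fun n => tn' (φ n)) (fun n => htn'0 _)
          (htn'top.comp hφ.tendsto_atTop) (fun n => mn (φ n + n₀))
          (hM₀bdd.subset (Set.range_subset_iff.mpr fun n => hmn _)) z x hconv2 ?_
        have hfe : (fun n => S (t + tn' (φ n)) (mn (φ n + n₀))) =
            fun n => S (tn (φ n + n₀)) (mn (φ n + n₀)) := by
          funext n; congr 1; simp only [htn'def]; ring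
        rw [hfe]
        exact hconv.comp ((tendsto_add_atTop_nat n₀).comp hφ.tendsto_atTop)
      exact ⟨z, hΛmem _ _ (htn'top.comp hφ.tendsto_atTop) (fun n => hmn _) hconv2, heq⟩
  have hΛattr : AttractsSet S Λ := by
    intro G hG
    by_contra hcon
    rw [ENNReal.tendsto_nhds_zero] at hcon
    push_neg at hcon
    obtain ⟨ε, hε0, hfreq⟩ := hcon
    set ε' : ℝ≥0∞ := min ε 1 with hε'
    have hε'0 : 0 < ε' := lt_min hε0 zero_lt_one
    have hfreq' : ∀ N : ℕ, ∃ t : ℝ, (N : ℝ) ≤ t ∧ ¬ attrDist (S t '' G) Λ ≤ ε := by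
      intro N
      obtain ⟨t, ht, hlt⟩ := (frequently_atTop.mp hfreq) (N : ℝ)
      exact ⟨t, ht, not_le.mpr hlt⟩
    choose tn htn hgt using hfreq'
    have htntop : Tendsto tn atTop atTop := tendsto_atTop_mono htn tendsto_natCast_atTop_atTop
    have hpt : ∀ n, ∃ g ∈ G, ε' < EMetric.infEdist (S (tn n) g) Λ := by
      intro n
      have h1 : ε' < attrDist (S (tn n) '' G) Λ :=
        lt_of_le_of_lt (min_le_left _ _) (lt_of_not_ge (hgt n))
      rw [attrDist] at h1
      obtain ⟨y, h2⟩ := lt_iSup_iff.mp h1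
      obtain ⟨hyG, h3⟩ := lt_iSup_iff.mp h2
      obtain ⟨g, hg, rfl⟩ := hyG
      exact ⟨g, hg, h3⟩
    choose gn hgnG hgnfar using hpt
    obtain ⟨φ, hφ, p, hpM, hconv⟩ := lemB G hG gn hgnG tn htntop
    have hps : ∀ s : ℝ, 0 ≤ s → p ∈ S s '' M₀ := by
      intro s hs
      set n₀ : ℕ := ⌈s⌉₊ with hn₀
      set tn' : ℕ → ℝ := fun n => tn (φ (n + n₀)) - s with htn'def
      have h0 : ∀ n, 0 ≤ tn' n := by
        intro n
        have h1 : ((φ (n + n₀) : ℕ) : ℝ) ≤ tn (φ (n + n₀)) := htn _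
        have h2 : (n + n₀ : ℕ) ≤ φ (n + n₀) := hφ.le_apply
        have h3 : s ≤ (n₀ : ℝ) := Nat.le_ceil s
        have h4 : ((n₀ : ℕ) : ℝ) ≤ ((φ (n + n₀) : ℕ) : ℝ) := by
          exact_mod_cast le_trans (Nat.le_add_left _ _) h2
        simp only [htn'def]; linarith
      have htop' : Tendsto tn' atTop atTop := by
        apply tendsto_atTop_add_const_right
        refine tendsto_atTop_mono (fun n => ?_) tendsto_natCast_atTop_atTop
        have h2 : (n : ℕ) ≤ φ (n + n₀) := le_trans (Nat.le_add_right _ _) hφ.le_apply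
        exact le_trans (by exact_mod_cast h2) (htn _)
      obtain ⟨ψ, hψ, u, huM, hconv2⟩ :=
        lemB G hG (fun n => gn (φ (n + n₀))) (fun n => hgnG _) tn' htop'
      have heq : S s u = p := by
        refine hac s hs (fun n => tn' (ψ n)) (fun n => h0 _) (htop'.comp hψ.tendsto_atTop)
          (fun n => gn (φ (ψ n + n₀)))
          (hG.subset (Set.range_subset_iff.mpr fun n => hgnG _)) u p hconv2 ?_
        have hfe : (fun n => S (s + tn' (ψ n)) (gn (φ (ψ n + n₀)))) =
            fun n => S (tn (φ (ψ n + n₀))) (gn (φ (ψ n + n₀))) := by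
          funext n; congr 1; simp only [htn'def]; ring
        rw [hfe]
        exact hconv.comp ((tendsto_add_atTop_nat n₀).comp hψ.tendsto_atTop)
      exact ⟨u, huM, heq⟩
    have hpΛ : p ∈ Λ := by
      rw [hΛdef, omegaLim]
      simp only [Set.mem_iInter]
      intro s hs
      apply subset_closure
      exact Set.mem_iUnion.mpr ⟨s, Set.mem_iUnion.mpr ⟨le_refl s, hps s hs⟩⟩
    have hlim : Tendsto (fun n => edist (S (tn (φ n)) (gn (φ n))) p) atTop (𝓝 0) :=
      (tendsto_iff_edist_tendsto_0.mp hconv)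
    obtain ⟨n, hn⟩ := (hlim.eventually_lt_const hε'0).exists
    have hle : EMetric.infEdist (S (tn (φ n)) (gn (φ n))) Λ ≤
        edist (S (tn (φ n)) (gn (φ n))) p := by
      have := EMetric.infEdist_le_edist_add_infEdist
        (x := S (tn (φ n)) (gn (φ n))) (y := p) (s := Λ)
      rwa [EMetric.infEdist_zero_of_mem hpΛ, add_zero] at this
    exact absurd (hgnfar (φ n)) (not_lt.mpr (hle.trans hn.le))
  -- decomposition M₀ = Λ ∪ E₀
  have hdecomp : M₀ = Λ ∪ E₀ := by
    apply Set.Subset.antisymm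
    · intro x hx
      by_cases hxE : x ∈ E₀
      · exact Or.inr hxE
      left
      obtain ⟨xs, hxsE, hxs⟩ := mem_closure_iff_seq_limit.mp hx
      choose jn hjn using fun n => Set.mem_iUnion.mp (hxsE n)
      rcases helper_dichotomy jn with ⟨J, hJ⟩ | hjtop
      · exfalso
        apply hxE
        have hxW : x ∈ (W J : Set V) := by
          have hclosed : IsClosed (W J : Set V) := (W J).finite_toSet.isClosed
          refine hclosed.mem_of_frequently_of_tendsto ?_ hxs
          rw [Nat.frequently_atTop_iff_infinite]
          refine hJ.mono fun n hn => ?_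
          rw [← hn]; exact hjn n
        exact hWE₀ J hxW
      · choose yn hynB hynS using fun n => hWsub (jn n) (hjn n)
        have hxk : ∀ k : ℕ, x ∈ S ((k : ℝ) * T) '' M₀ := by
          intro k
          obtain ⟨n₀, hn₀⟩ := eventually_atTop.mp (hjtop.eventually_ge_atTop k)
          set tn2 : ℕ → ℝ := fun n => ((k₁ + jn (n + n₀) : ℕ) : ℝ) * T - (k : ℝ) * T
            with htn2
          have h20 : ∀ n, 0 ≤ tn2 n := by
            intro n
            have h1 : k ≤ jn (n + n₀) := hn₀ (n + n₀) (Nat.le_add_left _ _)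
            have h2 : (k : ℝ) ≤ ((k₁ + jn (n + n₀) : ℕ) : ℝ) := by
              exact_mod_cast le_trans h1 (Nat.le_add_left _ _)
            simp only [htn2]
            nlinarith
          have h2top : Tendsto tn2 atTop atTop := by
            have hj2 : Tendsto (fun n => jn (n + n₀)) atTop atTop :=
              hjtop.comp (tendsto_add_atTop_nat n₀)
            have hj3 : Tendsto (fun n => (k₁ + jn (n + n₀) : ℕ)) atTop atTop :=
              tendsto_atTop_mono (fun n => Nat.le_add_left _ _) hj2
            have hj4 : Tendsto (fun n => ((k₁ + jn (n + n₀) : ℕ) : ℝ) * T) atTop atTop :=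
              (tendsto_natCast_atTop_atTop.comp hj3).atTop_mul_const hT
            simpa only [htn2, sub_eq_add_neg] using
              tendsto_atTop_add_const_right atTop (-((k : ℝ) * T)) hj4
          obtain ⟨ψ, hψ, u, huM, hconv2⟩ :=
            lemB B hBbdd (fun n => yn (n + n₀)) (fun n => hynB _) tn2 h2top
          have heq : S ((k : ℝ) * T) u = x := by
            refine hac _ (by positivity) (fun n => tn2 (ψ n)) (fun n => h20 _)
              (h2top.comp hψ.tendsto_atTop) (fun n => yn (ψ n + n₀))
              (hBbdd.subset (Set.range_subset_iff.mpr fun n => hynB _)) u x hconv2 ?_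
            have hfe : (fun n => S ((k : ℝ) * T + tn2 (ψ n)) (yn (ψ n + n₀))) =
                fun n => xs (ψ n + n₀) := by
              funext n
              rw [← hynS (ψ n + n₀)]
              congr 1
              simp only [htn2]; ring
            rw [hfe]
            exact hxs.comp ((tendsto_add_atTop_nat n₀).comp hψ.tendsto_atTop)
          exact ⟨u, huM, heq⟩
        rw [hΛdef, omegaLim]
        simp only [Set.mem_iInter]
        intro s hs
        apply subset_closure
        have hsk : s ≤ ((⌈s / T⌉₊ : ℕ) : ℝ) * T := by
          have h1 : s / T ≤ ((⌈s / T⌉₊ : ℕ) : ℝ) := Nat.le_ceil _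
          exact (div_le_iff₀ hT).mp h1
        exact Set.mem_iUnion.mpr ⟨((⌈s / T⌉₊ : ℕ) : ℝ) * T,
          Set.mem_iUnion.mpr ⟨hsk, hxk _⟩⟩
    · exact Set.union_subset hΛsub hE₀M₀
  have hM₀B : M₀ ⊆ B := by
    obtain ⟨tM, htM0, htM⟩ := hBabs M₀ hM₀bdd
    have h1 : Λ ⊆ B := by
      have h2 := hΛinv tM htM0
      rw [← h2]
      exact (Set.image_mono hΛsub).trans (htM tM le_rfl)
    rw [hdecomp]
    exact Set.union_subset h1 hE₀B
  have hfrac : fracDim M₀ ≤ ENNReal.ofReal (Real.log h / Real.log (1 / q)) := by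
    -- cardinality bound for the W j
    have hWcard : ∀ j : ℕ, ((W j).card : ℝ) ≤ b * (j + 1) * h ^ (k₁ + j) := by
      intro j
      induction j with
      | zero =>
        have h2 := (hF k₁ hk₁0).2.2
        have : (W 0).card = (F k₁).card := rfl
        rw [this]
        simpa using h2
      | succ j ih =>
        have h1 : ((W (j+1)).card : ℝ) ≤ ((F (k₁+j+1)).card : ℝ) + ((W j).card : ℝ) := by
          rw [hWsucc]
          have := (Finset.card_union_le (F (k₁+j+1)) ((W j).image (S T))).trans
            (Nat.add_le_add_left (Finset.card_image_le) _)
          exact_mod_cast this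
        have h2 := (hF (k₁+j+1) (by omega)).2.2
        have hh1 : h ^ (k₁ + j) ≤ h ^ (k₁ + j + 1) :=
          pow_le_pow_right₀ hh (by omega)
        have hhpos : (0:ℝ) < h ^ (k₁ + j) := by positivity
        calc ((W (j+1)).card : ℝ) ≤ b * h ^ (k₁+j+1) + b * (j+1) * h ^ (k₁+j) := by
              push_cast at h1 ⊢
              nlinarith [ih]
          _ ≤ b * ((j:ℝ) + 1 + 1) * h ^ (k₁ + (j+1)) := by
              have : (k₁ + (j+1)) = k₁ + j + 1 := rfl
              rw [this]
              nlinarith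
          _ = b * (((j+1:ℕ):ℝ) + 1) * h ^ (k₁ + (j+1)) := by push_cast; ring
    -- the finite covering sets and their cardinality bound
    set cR : ℕ → ℝ := fun m => b * ((m:ℝ) + k₁ + 1)^2 * h ^ (2*k₁ + m) with hcRdef
    have hcRpos : ∀ m, 0 < cR m := by
      intro m
      have : (0:ℝ) < (m:ℝ) + k₁ + 1 := by positivity
      simp only [hcRdef]
      positivity
    have hcovN : ∀ m : ℕ, coverN M₀ (4 * (a * q ^ (k₁ + m))) ≤ ENNReal.ofReal (cR m) := by
      intro m
      set Fc : Finset V := (Finset.range (m + k₁)).biUnion W ∪ F (k₁ + m) with hFc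
      have hrpos : (0:ℝ) < a * q ^ (k₁ + m) := by positivity
      have hcov1 : E₀ ⊆ ⋃ x ∈ Fc, ball x (a * q ^ (k₁ + m)) := by
        intro x hx
        obtain ⟨j, hj⟩ := Set.mem_iUnion.mp hx
        by_cases hjm : j < m + k₁
        · have hmem : x ∈ Fc := by
            simp only [hFc, Finset.mem_union, Finset.mem_biUnion]
            exact Or.inl ⟨j, Finset.mem_range.mpr hjm, hj⟩
          exact Set.mem_iUnion.mpr ⟨x, Set.mem_iUnion.mpr ⟨hmem, mem_ball_self hrpos⟩⟩
        · have h2 := hNetTail m j (by omega) hj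
          simp only [Set.mem_iUnion, exists_prop] at h2
          obtain ⟨y, hy, hxy⟩ := h2
          have hmem : y ∈ Fc := by
            simp only [hFc, Finset.mem_union]
            exact Or.inr hy
          exact Set.mem_iUnion.mpr ⟨y, Set.mem_iUnion.mpr ⟨hmem, hxy⟩⟩
      have hcov2 : M₀ ⊆ ⋃ x ∈ Fc, ball x (2 * (a * q ^ (k₁ + m))) := by
        have hcl : IsClosed (⋃ x ∈ (Fc : Set V), closedBall x (a * q ^ (k₁ + m))) :=
          Fc.finite_toSet.isClosed_biUnion fun x _ => isClosed_closedBall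
        have hsub1 : E₀ ⊆ ⋃ x ∈ (Fc : Set V), closedBall x (a * q ^ (k₁ + m)) := by
          refine hcov1.trans ?_
          refine Set.iUnion₂_mono fun x _ => ball_subset_closedBall
        have hsub2 : M₀ ⊆ ⋃ x ∈ (Fc : Set V), closedBall x (a * q ^ (k₁ + m)) :=
          closure_minimal hsub1 hcl
        refine hsub2.trans (Set.iUnion₂_mono fun x _ => ?_)
        exact closedBall_subset_ball (by linarith)
      have h3 := helper_coverN_le_of_cover hcov2
      rw [show (2 * (2 * (a * q ^ (k₁ + m)))) = 4 * (a * q ^ (k₁ + m)) by ring] at h3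
      refine h3.trans ?_
      -- cardinality
      have hcard : ((Fc.card : ℝ)) ≤ cR m := by
        have h4 : (Fc.card : ℕ) ≤ ((Finset.range (m + k₁)).biUnion W).card + (F (k₁+m)).card :=
          Finset.card_union_le _ _
        have h5 : (((Finset.range (m + k₁)).biUnion W).card : ℝ) ≤
            ∑ j ∈ Finset.range (m + k₁), ((W j).card : ℝ) := by
          exact_mod_cast Finset.card_biUnion_le
        have h6 : ∑ j ∈ Finset.range (m + k₁), ((W j).card : ℝ) ≤
            ∑ j ∈ Finset.range (m + k₁), b * ((m:ℝ) + k₁ + 1) * h ^ (2*k₁ + m) := by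
          refine Finset.sum_le_sum fun j hj => ?_
          have hj' : j < m + k₁ := Finset.mem_range.mp hj
          refine (hWcard j).trans ?_
          have e1 : ((j:ℝ) + 1) ≤ ((m:ℝ) + k₁ + 1) := by
            have : (j:ℝ) ≤ (m:ℝ) + k₁ := by exact_mod_cast hj'.le
            linarith
          have e2 : h ^ (k₁ + j) ≤ h ^ (2*k₁ + m) := pow_le_pow_right₀ hh (by omega)
          have hb1 : (0:ℝ) < h ^ (k₁ + j) := by positivity
          have e4 : b * ((j:ℝ) + 1) ≤ b * ((m:ℝ) + k₁ + 1) :=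
            mul_le_mul_of_nonneg_left e1 hb.le
          exact mul_le_mul e4 e2 hb1.le (by positivity)
        have h7 : ((F (k₁+m)).card : ℝ) ≤ b * ((m:ℝ) + k₁ + 1) * h ^ (2*k₁ + m) := by
          refine ((hF (k₁+m) (by omega)).2.2).trans ?_
          have e2 : h ^ (k₁ + m) ≤ h ^ (2*k₁ + m) := pow_le_pow_right₀ hh (by omega)
          have e3 : (1:ℝ) ≤ (m:ℝ) + k₁ + 1 := by
            have h9 : (0:ℝ) ≤ (m:ℝ) + k₁ := by positivity
            linarith
          have hpw2 : (0:ℝ) < h ^ (2*k₁ + m) := by positivity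
          calc (b : ℝ) * h ^ (k₁ + m) ≤ b * h ^ (2*k₁ + m) :=
                mul_le_mul_of_nonneg_left e2 hb.le
            _ ≤ b * ((m:ℝ) + k₁ + 1) * h ^ (2*k₁ + m) := by
                nlinarith [mul_nonneg (mul_nonneg hb.le (sub_nonneg.mpr e3)) hpw2.le]
        rw [Finset.sum_const, Finset.card_range] at h6
        have h8 : ((Fc.card : ℝ)) ≤
            (m + k₁ : ℕ) • (b * ((m:ℝ) + k₁ + 1) * h ^ (2*k₁ + m)) +
              b * ((m:ℝ) + k₁ + 1) * h ^ (2*k₁ + m) := by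
          have := (h5.trans h6)
          have h9 : ((Fc.card : ℝ)) ≤ (((Finset.range (m + k₁)).biUnion W).card : ℝ) +
              ((F (k₁+m)).card : ℝ) := by exact_mod_cast h4
          linarith
        rw [nsmul_eq_mul] at h8
        refine h8.trans ?_
        simp only [hcRdef]
        have hpw : (0:ℝ) < h ^ (2*k₁ + m) := by positivity
        have : ((m + k₁ : ℕ) : ℝ) = (m:ℝ) + k₁ := by push_cast; ring
        rw [this]
        have heq2 : ((m:ℝ) + ↑k₁) * (b * ((m:ℝ) + ↑k₁ + 1) * h ^ (2*k₁ + m)) +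
            b * ((m:ℝ) + ↑k₁ + 1) * h ^ (2*k₁ + m) =
            b * ((m:ℝ) + ↑k₁ + 1)^2 * h ^ (2*k₁ + m) := by ring
        linarith
      calc (Fc.card : ℝ≥0∞) = ENNReal.ofReal ((Fc.card : ℝ)) :=
            (ENNReal.ofReal_natCast _).symm
        _ ≤ ENNReal.ofReal (cR m) := ENNReal.ofReal_le_ofReal hcard
    -- now the limsup estimate
    set L : ℝ := Real.log h / Real.log (1 / q) with hLdef
    have hL0 : 0 ≤ L := div_nonneg (Real.log_nonneg hh) hlogq.le
    have key : ∀ c : ℝ, L < c → ∀ᶠ ε in 𝓝[>] (0:ℝ),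
        (if coverN M₀ ε = ⊤ then (⊤ : ℝ≥0∞)
          else ENNReal.ofReal (Real.log (coverN M₀ ε).toReal / Real.log (1 / ε)))
          ≤ ENNReal.ofReal c := by
      intro c hc
      have hc0 : 0 < c := lt_of_le_of_lt hL0 hc
      set γ : ℝ := c * Real.log (1 / q) - Real.log h with hγdef
      have hγpos : 0 < γ := by
        have := (div_lt_iff₀ hlogq).mp hc
        simp only [hγdef]
        linarith
      -- eventual inequality in m
      have hlit := Real.isLittleO_log_id_atTop.def (by positivity : (0:ℝ) < γ/4)
      have htm : Tendsto (fun m : ℕ => (m:ℝ) + k₁ + 2) atTop atTop := by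
        apply tendsto_atTop_add_const_right
        apply tendsto_atTop_add_const_right
        exact tendsto_natCast_atTop_atTop
      set K : ℝ := Real.log b + (2*(k₁:ℝ)+1) * Real.log h - c * k₁ * Real.log (1/q) +
        c * Real.log (4*a) with hKdef
      have hev : ∀ᶠ m : ℕ in atTop,
          Real.log ((m:ℝ) + k₁ + 2) ≤ (γ/4) * ((m:ℝ) + k₁ + 2) ∧
          K + (γ/2) * ((k₁:ℝ) + 2) ≤ (γ/2) * m := by
        have hev1 := htm.eventually hlit
        have hev2 : ∀ᶠ m : ℕ in atTop, K + (γ/2) * ((k₁:ℝ) + 2) ≤ (γ/2) * m := by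
          have ht2 : Tendsto (fun m : ℕ => (γ/2) * (m:ℝ)) atTop atTop :=
            (tendsto_natCast_atTop_atTop).const_mul_atTop (by positivity)
          exact ht2.eventually_ge_atTop _
        filter_upwards [hev1, hev2] with m h1 h2
        refine ⟨?_, h2⟩
        have hy : (0:ℝ) ≤ (m:ℝ) + k₁ + 2 := by positivity
        have := h1
        simp only [Real.norm_eq_abs, id_eq] at this
        calc Real.log ((m:ℝ) + k₁ + 2) ≤ |Real.log ((m:ℝ) + k₁ + 2)| := le_abs_self _
          _ ≤ γ/4 * |(m:ℝ) + k₁ + 2| := this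
          _ = γ/4 * ((m:ℝ) + k₁ + 2) := by rw [abs_of_nonneg hy]
      obtain ⟨M, hM⟩ := eventually_atTop.mp hev
      set M₁ : ℕ := max M 1 with hM₁def
      -- key log inequality for m ≥ M₁
      have hlogineq : ∀ m : ℕ, M₁ ≤ m →
          Real.log (cR (m+1)) ≤ c * (((k₁:ℝ) + m) * Real.log (1/q) - Real.log (4*a)) := by
        intro m hm
        obtain ⟨h1, h2⟩ := hM m (le_trans (le_max_left _ _) hm)
        have hx2 : (0:ℝ) < (m:ℝ) + 1 + k₁ + 1 := by positivity
        have hlcR : Real.log (cR (m+1)) =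
            Real.log b + 2 * Real.log ((m:ℝ) + k₁ + 2) + (2*(k₁:ℝ) + m + 1) * Real.log h := by
          simp only [hcRdef]
          rw [Real.log_mul (by positivity) (by positivity),
            Real.log_mul hb.ne' (by positivity), Real.log_pow, Real.log_pow]
          have e1 : (((m+1:ℕ):ℝ) + k₁ + 1) = (m:ℝ) + k₁ + 2 := by push_cast; ring
          rw [e1]
          push_cast
          ring
        rw [hlcR]
        have hlh : 0 ≤ Real.log h := Real.log_nonneg hh
        simp only [hγdef] at h1 h2
        simp only [hKdef] at h2
        nlinarith [h1, h2]
      -- eventual smallness of ε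
      have hrad4 : Tendsto (fun m : ℕ => 4 * (a * q ^ (k₁ + m + 1))) atTop (𝓝 0) := by
        have h1 : Tendsto (fun m : ℕ => a * q ^ (k₁ + m)) atTop (𝓝 0) := hradius
        have h2 : Tendsto (fun m : ℕ => 4 * q * (a * q ^ (k₁ + m))) atTop (𝓝 0) := by
          have := h1.const_mul (4 * q)
          simpa using this
        refine h2.congr fun m => ?_
        rw [pow_succ]
        ring
      set δ₀ : ℝ := min 1 (4 * (a * q ^ (k₁ + M₁))) with hδ₀def
      have hδ₀pos : 0 < δ₀ := lt_min one_pos (by positivity)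
      filter_upwards [Ioo_mem_nhdsGT hδ₀pos]
        with ε hε
      obtain ⟨hε0, hεδ⟩ := hε
      have hex : ∃ m : ℕ, 4 * (a * q ^ (k₁ + m + 1)) ≤ ε :=
        ((hrad4.eventually_lt_const hε0).mono fun m hm => hm.le).exists
      set m : ℕ := Nat.find hex with hmdef
      have hm1 : 4 * (a * q ^ (k₁ + m + 1)) ≤ ε := Nat.find_spec hex
      have hmge : M₁ ≤ m := by
        by_contra hlt
        push_neg at hlt
        have hq' : q ^ (k₁ + M₁) ≤ q ^ (k₁ + m + 1) :=
          pow_le_pow_of_le_one hq0.le hq1.le (by omega)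
        have : 4 * (a * q ^ (k₁ + M₁)) ≤ ε := by nlinarith [hm1]
        have hcontra : ε < ε := lt_of_lt_of_le (lt_of_lt_of_le hεδ (min_le_right _ _)) this
        exact lt_irrefl _ hcontra
      have hm1' : 1 ≤ m := le_trans (le_max_right _ _) hmge
      have hmin : ε < 4 * (a * q ^ (k₁ + m)) := by
        have := Nat.find_min hex (show m - 1 < m by omega)
        push_neg at this
        rwa [show k₁ + (m-1) + 1 = k₁ + m by omega] at this
      -- covering estimate for this ε
      have hcN : coverN M₀ ε ≤ ENNReal.ofReal (cR (m+1)) := by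
        refine (helper_coverN_anti hm1).trans ?_
        exact hcovN (m+1)
      have hne : coverN M₀ ε ≠ ⊤ :=
        ne_top_of_le_ne_top ENNReal.ofReal_ne_top hcN
      rw [if_neg hne]
      -- the quotient bound
      have hε1 : ε < 1 := lt_of_lt_of_le hεδ (min_le_left _ _)
      have hlogε : 0 < Real.log (1/ε) := Real.log_pos (by rw [lt_div_iff₀ hε0]; linarith)
      refine ENNReal.ofReal_le_ofReal ?_
      rw [div_le_iff₀ hlogε]
      have htR1 : 1 ≤ (coverN M₀ ε).toReal := by
        have h1 := helper_one_le_coverN hM₀ne ε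
        have := (ENNReal.toReal_le_toReal (by simp) hne).mpr h1
        simpa using this
      have htR2 : (coverN M₀ ε).toReal ≤ cR (m+1) := by
        refine ENNReal.toReal_le_of_le_ofReal (hcRpos (m+1)).le hcN
      have hlog1 : Real.log (coverN M₀ ε).toReal ≤ Real.log (cR (m+1)) :=
        Real.log_le_log (by linarith) htR2
      have hlog2 : ((k₁:ℝ) + m) * Real.log (1/q) - Real.log (4*a) ≤ Real.log (1/ε) := by
        have hlt : Real.log ε < Real.log (4 * (a * q ^ (k₁ + m))) :=
          Real.log_lt_log hε0 hmin
        have he1 : Real.log (4 * (a * q ^ (k₁ + m))) =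
            Real.log (4*a) + ((k₁:ℝ) + m) * Real.log q := by
          rw [show (4:ℝ) * (a * q ^ (k₁ + m)) = (4*a) * q ^ (k₁+m) by ring,
            Real.log_mul (by positivity) (by positivity), Real.log_pow]
          push_cast
          ring
        have he2 : Real.log (1/ε) = -Real.log ε := by rw [one_div, Real.log_inv]
        rw [he2, hlogq']
        rw [he1] at hlt
        linarith
      calc Real.log (coverN M₀ ε).toReal ≤ Real.log (cR (m+1)) := hlog1
        _ ≤ c * (((k₁:ℝ) + m) * Real.log (1/q) - Real.log (4*a)) := hlogineq m hmge
        _ ≤ c * Real.log (1/ε) := mul_le_mul_of_nonneg_left hlog2 hc0.le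
    -- conclude via limsup
    have hls : ∀ c : ℝ, L < c → fracDim M₀ ≤ ENNReal.ofReal c := by
      intro c hc
      rw [fracDim]
      exact limsup_le_of_le (by isBoundedDefault) (key c hc)
    refine ENNReal.le_of_forall_pos_le_add fun δ hδ _ => ?_
    have hδ' : (0:ℝ) < (δ:ℝ) := hδ
    calc fracDim M₀ ≤ ENNReal.ofReal (L + δ) := hls _ (by linarith)
      _ ≤ ENNReal.ofReal L + ENNReal.ofReal δ := ENNReal.ofReal_add_le
      _ = ENNReal.ofReal L + δ := by rw [ENNReal.ofReal_coe_nnreal]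
  have hfracne : fracDim M₀ ≠ ⊤ := by
    intro hcon
    rw [hcon, top_le_iff] at hfrac
    exact ENNReal.ofReal_ne_top hfrac
  exact ⟨E₀, hE₀cnt, hE₀B, hM₀B,
    ⟨hM₀ne, hM₀comp, hSTM₀, hfracne, ξ₀, hξ₀pos, hexp ξ₀ hξ₀pos hξ₀lt⟩,
    hexp, hfrac, ⟨hΛne, hΛcomp, hΛinv, hΛattr⟩, hdecomp⟩



end Statement2
end

section
/- Let A be a nonempty subset of a metric space (V,d) and let ρ: A × A → [0,∞) be a pseudometric on A (symmetric, satisfying the triangle inequality, with ρ(x,x) = 0) such that (A,ρ) is totally bounded. Suppose S: A → V is a map and η ≥ 0 is such that d(S(x),S(y)) ≤ η·d(x,y) + ρ(x,y) for all x,y ∈ A. If N̂^V(A,ε) < ∞ for some ε > 0, then for any σ > 0 one has N̂^V(S(A), (η+σ)ε) ≤ N̂^V(A,ε)·c_ρ(A,ε,σε), where c_ρ(A,ε,μ) = sup{ m_ρ(F,μ) : ∅ ≠ F ⊆ A, diam^V(F) ≤ 2ε }; moreover c_ρ(A,ε,μ) ≤ m_ρ(A,μ). -/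
open Filter Metric Set Topology Bornology
open scoped ENNReal

section Defs

variable {V : Type*} [MetricSpace V]

/-- `N̂^V(B,ε)`: minimal number of subsets of `B` of diameter at most `2ε` covering `B`. -/
noncomputable def coverNDiam (B : Set V) (ε : ℝ) : ℝ≥0∞ :=
  ⨅ (𝒞 : Finset (Set V)) (_ : ∀ F ∈ 𝒞, F ⊆ B ∧ EMetric.diam F ≤ ENNReal.ofReal (2 * ε))
    (_ : B ⊆ ⋃₀ ↑𝒞), (𝒞.card : ℝ≥0∞)

/-- `m_ρ(F,ε)`: the maximal cardinality of an `ε`-distinguishable (w.r.t. `ρ`) subset of `F`. -/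
noncomputable def maxDisting {α : Type*} (ρ : α → α → ℝ) (F : Set α) (ε : ℝ) : ℝ≥0∞ :=
  ⨆ (U : Finset α) (_ : ↑U ⊆ F) (_ : ∀ x ∈ U, ∀ y ∈ U, x ≠ y → ε ≤ ρ x y),
    (U.card : ℝ≥0∞)

/-- `c_ρ(A,ε,μ) = sup { m_ρ(F,μ) : ∅ ≠ F ⊆ A, diam^V(F) ≤ 2ε }`. -/
noncomputable def cRho (ρ : V → V → ℝ) (A : Set V) (ε μ : ℝ) : ℝ≥0∞ :=
  ⨆ (F : Set V) (_ : F ⊆ A) (_ : F.Nonempty)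
    (_ : EMetric.diam F ≤ ENNReal.ofReal (2 * ε)), maxDisting ρ F μ

end Defs

section Statement5

variable {V : Type*} [MetricSpace V]

theorem fundamental_covering_lemma
    (A : Set V) (hA : A.Nonempty) (ρ : V → V → ℝ)
    (hρ_nonneg : ∀ x ∈ A, ∀ y ∈ A, 0 ≤ ρ x y)
    (hρ_symm : ∀ x ∈ A, ∀ y ∈ A, ρ x y = ρ y x)
    (hρ_refl : ∀ x ∈ A, ρ x x = 0)
    (hρ_triangle : ∀ x ∈ A, ∀ y ∈ A, ∀ z ∈ A, ρ x z ≤ ρ x y + ρ y z)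
    (hρ_totallyBounded : ∀ δ : ℝ, 0 < δ →
      ∃ U : Finset V, ↑U ⊆ A ∧ ∀ x ∈ A, ∃ u ∈ U, ρ u x < δ)
    (S : V → V) (η : ℝ) (hη : 0 ≤ η)
    (hS : ∀ x ∈ A, ∀ y ∈ A, dist (S x) (S y) ≤ η * dist x y + ρ x y)
    (ε : ℝ) (hε : 0 < ε) (hfin : coverNDiam A ε ≠ ⊤) :
    (∀ σ : ℝ, 0 < σ →
      coverNDiam (S '' A) ((η + σ) * ε) ≤ coverNDiam A ε * cRho ρ A ε (σ * ε)) ∧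
    (∀ μ : ℝ, 0 < μ → cRho ρ A ε μ ≤ maxDisting ρ A μ) := by
  classical
  constructor
  · intro σ hσ
    set μ := σ * ε with hμdef
    have hμ : 0 < μ := by positivity
    -- for each F ⊆ A, a maximal μ-distinguishable subset
    have key : ∀ F : Set V, ∃ U : Finset V, F ⊆ A →
        (↑U ⊆ F ∧ (∀ x ∈ U, ∀ y ∈ U, x ≠ y → μ ≤ ρ x y) ∧
          ∀ x ∈ F, ∃ u ∈ U, ρ u x < μ) := by
      intro F
      by_cases hFA : F ⊆ A
      · obtain ⟨W, hWA, hW⟩ := hρ_totallyBounded (μ/2) (by positivity)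
        choose g hgW hgρ using hW
        have bound : ∀ U : Finset V, ↑U ⊆ F →
            (∀ x ∈ U, ∀ y ∈ U, x ≠ y → μ ≤ ρ x y) → U.card ≤ W.card := by
          intro U hUF hd
          apply Finset.card_le_card_of_injOn (fun u => if h : u ∈ A then g u h else u)
          · intro u hu
            have huA : u ∈ A := hFA (hUF hu)
            simp only [dif_pos huA]
            exact hgW u huA
          · intro u1 h1 u2 h2 hfe
            by_contra hne
            have h1A : u1 ∈ A := hFA (hUF h1)
            have h2A : u2 ∈ A := hFA (hUF h2)
            simp only [dif_pos h1A, dif_pos h2A] at hfe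
            have hwA : g u1 h1A ∈ A := hWA (hgW u1 h1A)
            have ht := hρ_triangle u1 h1A (g u1 h1A) hwA u2 h2A
            have hs := hρ_symm u1 h1A (g u1 h1A) hwA
            have e1 := hgρ u1 h1A
            have e2 := hgρ u2 h2A
            rw [← hfe] at e2
            have hd12 := hd u1 (Finset.mem_coe.mp h1) u2 (Finset.mem_coe.mp h2) hne
            linarith
        set T : Set ℕ := {k | ∃ U : Finset V, ↑U ⊆ F ∧
            (∀ x ∈ U, ∀ y ∈ U, x ≠ y → μ ≤ ρ x y) ∧ U.card = k} with hT
        have hT0 : (0 : ℕ) ∈ T := ⟨∅, by simp⟩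
        have hTb : BddAbove T := ⟨W.card, by rintro k ⟨U, h1, h2, rfl⟩; exact bound U h1 h2⟩
        obtain ⟨U, hUF, hUd, hUc⟩ := Nat.sSup_mem ⟨0, hT0⟩ hTb
        refine ⟨U, fun _ => ⟨hUF, hUd, ?_⟩⟩
        intro x hxF
        by_contra hcon
        push_neg at hcon
        have hxA : x ∈ A := hFA hxF
        have hxU : x ∉ U := by
          intro hxU
          have h0 := hcon x hxU
          rw [hρ_refl x hxA] at h0
          linarith
        have hins : (U.card + 1) ∈ T := by
          refine ⟨insert x U, ?_, ?_, ?_⟩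
          · rw [Finset.coe_insert]
            exact Set.insert_subset hxF hUF
          · intro a ha b hb hab
            rcases Finset.mem_insert.mp ha with rfl | ha'
            · rcases Finset.mem_insert.mp hb with rfl | hb'
              · exact absurd rfl hab
              · rw [hρ_symm a hxA b (hFA (hUF hb'))]
                exact hcon b hb'
            · rcases Finset.mem_insert.mp hb with rfl | hb'
              · exact hcon a ha'
              · exact hUd a ha' b hb' hab
          · rw [Finset.card_insert_of_notMem hxU]
        have hle := le_csSup hTb hins
        omega
      · exact ⟨∅, fun h => absurd h hFA⟩
    choose Ufun hUfun using key
    -- a minimal-cardinality admissible cover of A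
    set T' : Set ℕ := {k | ∃ 𝒞 : Finset (Set V),
      (∀ F ∈ 𝒞, F ⊆ A ∧ EMetric.diam F ≤ ENNReal.ofReal (2 * ε)) ∧
        A ⊆ ⋃₀ ↑𝒞 ∧ 𝒞.card = k} with hT'
    have hex : ∃ 𝒞 : Finset (Set V),
        (∀ F ∈ 𝒞, F ⊆ A ∧ EMetric.diam F ≤ ENNReal.ofReal (2 * ε)) ∧ A ⊆ ⋃₀ ↑𝒞 := by
      by_contra hcon
      push_neg at hcon
      apply hfin
      refine top_unique ?_
      unfold coverNDiam
      exact le_iInf fun 𝒞 => le_iInf fun h1 => le_iInf fun h2 => (hcon 𝒞 h1 h2).elim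
    have hT'ne : T'.Nonempty := by
      obtain ⟨𝒞, h1, h2⟩ := hex
      exact ⟨𝒞.card, 𝒞, h1, h2, rfl⟩
    obtain ⟨𝒞₀, h𝒞₀adm, h𝒞₀cov, h𝒞₀card⟩ := Nat.sInf_mem hT'ne
    have hn_le : (𝒞₀.card : ℝ≥0∞) ≤ coverNDiam A ε := by
      unfold coverNDiam
      refine le_iInf fun 𝒞 => le_iInf fun h1 => le_iInf fun h2 => ?_
      exact Nat.cast_le.mpr (h𝒞₀card ▸ Nat.sInf_le ⟨𝒞, h1, h2, rfl⟩)
    set D : Set V → Finset (Set V) :=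
      fun F => (Ufun F).image (fun u => S '' {x | x ∈ F ∧ ρ u x < μ}) with hD
    set 𝒞' : Finset (Set V) := 𝒞₀.biUnion D with h𝒞'
    have hadm : ∀ G ∈ 𝒞', G ⊆ S '' A ∧
        EMetric.diam G ≤ ENNReal.ofReal (2 * ((η + σ) * ε)) := by
      intro G hG
      obtain ⟨F, hF, hGD⟩ := Finset.mem_biUnion.mp hG
      obtain ⟨u, hu, rfl⟩ := Finset.mem_image.mp hGD
      obtain ⟨hFA, hFdiam⟩ := h𝒞₀adm F hF
      obtain ⟨hUF, hUd, hUmax⟩ := hUfun F hFA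
      have huA : u ∈ A := hFA (hUF hu)
      constructor
      · exact fun _ ⟨x, hx, h⟩ => ⟨x, hFA hx.1, h⟩
      · apply EMetric.diam_le
        rintro a ⟨x, ⟨hxF, hxρ⟩, rfl⟩ b ⟨y, ⟨hyF, hyρ⟩, rfl⟩
        rw [edist_dist]
        apply ENNReal.ofReal_le_ofReal
        have hxA : x ∈ A := hFA hxF
        have hyA : y ∈ A := hFA hyF
        have hdxy : dist x y ≤ 2 * ε := by
          have h1 := (EMetric.edist_le_diam_of_mem hxF hyF).trans hFdiam
          rw [edist_dist] at h1
          exact (ENNReal.ofReal_le_ofReal_iff (by positivity)).mp h1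
        have hρxy : ρ x y ≤ 2 * μ := by
          have ht := hρ_triangle x hxA u huA y hyA
          have hs := hρ_symm x hxA u huA
          linarith
        have hSd := hS x hxA y hyA
        have hm : η * dist x y ≤ η * (2 * ε) := mul_le_mul_of_nonneg_left hdxy hη
        have hgoal : 2 * ((η + σ) * ε) = η * (2 * ε) + 2 * (σ * ε) := by ring
        rw [hgoal]
        linarith
    have hcov : S '' A ⊆ ⋃₀ ↑𝒞' := by
      rintro _ ⟨x, hxA, rfl⟩
      obtain ⟨F, hF𝒞, hxF⟩ := h𝒞₀cov hxA
      have hF : F ∈ 𝒞₀ := Finset.mem_coe.mp hF𝒞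
      obtain ⟨hFA, _⟩ := h𝒞₀adm F hF
      obtain ⟨hUF, hUd, hUmax⟩ := hUfun F hFA
      obtain ⟨u, hu, huρ⟩ := hUmax x hxF
      refine ⟨S '' {y | y ∈ F ∧ ρ u y < μ}, ?_, ⟨x, ⟨hxF, huρ⟩, rfl⟩⟩
      exact Finset.mem_coe.mpr (Finset.mem_biUnion.mpr ⟨F, hF, Finset.mem_image.mpr ⟨u, hu, rfl⟩⟩)
    have hcard : (𝒞'.card : ℝ≥0∞) ≤ (𝒞₀.card : ℝ≥0∞) * cRho ρ A ε μ := by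
      have h1 : (𝒞'.card : ℝ≥0∞) ≤ ∑ F ∈ 𝒞₀, ((D F).card : ℝ≥0∞) := by
        rw [← Nat.cast_sum]
        exact Nat.cast_le.mpr Finset.card_biUnion_le
      refine h1.trans ?_
      have h2 : ∀ F ∈ 𝒞₀, ((D F).card : ℝ≥0∞) ≤ cRho ρ A ε μ := by
        intro F hF
        obtain ⟨hFA, hFdiam⟩ := h𝒞₀adm F hF
        obtain ⟨hUF, hUd, hUmax⟩ := hUfun F hFA
        have hc1 : ((D F).card : ℝ≥0∞) ≤ ((Ufun F).card : ℝ≥0∞) :=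
          Nat.cast_le.mpr Finset.card_image_le
        rcases F.eq_empty_or_nonempty with rfl | hFne
        · have hUe : Ufun (∅ : Set V) = ∅ :=
            Finset.eq_empty_of_forall_notMem fun x hx => absurd (hUF hx) (Set.notMem_empty x)
          refine hc1.trans ?_
          rw [hUe]
          simp
        · refine hc1.trans ?_
          have hm : ((Ufun F).card : ℝ≥0∞) ≤ maxDisting ρ F μ := by
            unfold maxDisting
            exact le_iSup_of_le (Ufun F) (le_iSup_of_le hUF (le_iSup_of_le hUd le_rfl))
          refine hm.trans ?_
          unfold cRho
          exact le_iSup_of_le F (le_iSup_of_le hFA (le_iSup_of_le hFne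
            (le_iSup_of_le hFdiam le_rfl)))
      calc ∑ F ∈ 𝒞₀, ((D F).card : ℝ≥0∞) ≤ ∑ _F ∈ 𝒞₀, cRho ρ A ε μ :=
            Finset.sum_le_sum h2
        _ = (𝒞₀.card : ℝ≥0∞) * cRho ρ A ε μ := by
            rw [Finset.sum_const, nsmul_eq_mul]
    have hle : coverNDiam (S '' A) ((η + σ) * ε) ≤ (𝒞'.card : ℝ≥0∞) := by
      unfold coverNDiam
      exact iInf_le_of_le 𝒞' (iInf_le_of_le hadm (iInf_le_of_le hcov le_rfl))
    exact hle.trans (hcard.trans (by gcongr))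
  · intro μ hμ
    unfold cRho
    refine iSup_le fun F => iSup_le fun hFA => iSup_le fun _ => iSup_le fun _ => ?_
    unfold maxDisting
    refine iSup_le fun U => iSup_le fun hUF => iSup_le fun hd => ?_
    exact le_iSup_of_le U (le_iSup_of_le (hUF.trans hFA) (le_iSup_of_le hd le_rfl))

end Statement5
end
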